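/- arXiv:1512.08448 — 7 statements merged into one kernel-verified Lean document; each statement's English description precedes it below -/
import Mathlib

section
/- Let n ≥ 2 and let d = (d_1,…,d_n) ∈ ℤ^n be the degree sequence of some simple graph on vertex set [n]. Then d is tight — i.e., there exist disjoint subsets S, T ⊆ [n] with S ∪ T ≠ ∅ such that Σ_{i∈S} d_i − Σ_{i∈T} d_i = |S|·(n − |T| − 1) — if and only if d is the degree sequence of a weakly split graph on [n]. -/
/-- The degree sequence (with values in `ℤ`) of a simple graph on `Fin n`. -/
noncomputable def degSeq {n : ℕ} (G : SimpleGraph (Fin n)) (v : Fin n) : ℤ :=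
  ((G.neighborSet v).ncard : ℤ)

/-- A sequence `d ∈ ℤ^n` is tight if it attains equality in one of the Erdős–Gallai
conditions: there are disjoint `S, T ⊆ [n]` with `S ∪ T ≠ ∅` and
`∑_{i∈S} dᵢ − ∑_{i∈T} dᵢ = |S|(n − |T| − 1)`. -/
def Tight (n : ℕ) (d : Fin n → ℤ) : Prop :=
  ∃ S T : Finset (Fin n), Disjoint S T ∧ (S ∪ T).Nonempty ∧
    ∑ i ∈ S, d i - ∑ i ∈ T, d i = (S.card : ℤ) * ((n : ℤ) - T.card - 1)

/-- A graph on `Fin n` is weakly split if there is a partition `V = V_c ⊎ V_i ⊎ V_o`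
such that the induced subgraph on `V_c ∪ V_i` is a nonempty split graph with clique
`V_c` and independent set `V_i`, every node of `V_o` is adjacent to every node of `V_c`,
and no node of `V_o` is adjacent to a node of `V_i`. -/
def WeaklySplit {n : ℕ} (G : SimpleGraph (Fin n)) : Prop :=
  ∃ Vc Vi Vo : Finset (Fin n),
    Disjoint Vc Vi ∧ Disjoint Vc Vo ∧ Disjoint Vi Vo ∧
    Vc ∪ Vi ∪ Vo = Finset.univ ∧ (Vc ∪ Vi).Nonempty ∧
    (∀ u ∈ Vc, ∀ v ∈ Vc, u ≠ v → G.Adj u v) ∧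
    (∀ u ∈ Vi, ∀ v ∈ Vi, ¬ G.Adj u v) ∧
    (∀ o ∈ Vo, ∀ c ∈ Vc, G.Adj o c) ∧
    (∀ o ∈ Vo, ∀ i ∈ Vi, ¬ G.Adj o i)

open Finset
open scoped Classical

section Aux

variable {n : ℕ} (G : SimpleGraph (Fin n))

/-- The number of (ordered) adjacent pairs in `A × B`. -/
noncomputable def ecnt (A B : Finset (Fin n)) : ℕ :=
  ∑ v ∈ A, (B.filter (fun w => G.Adj v w)).card

lemma degSeq_eq (v : Fin n) :
    degSeq G v = ((Finset.univ.filter (fun w => G.Adj v w)).card : ℤ) := by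
  have h : G.neighborSet v = ↑(Finset.univ.filter (fun w => G.Adj v w)) := by
    ext w; simp [SimpleGraph.mem_neighborSet]
  rw [degSeq, h, Set.ncard_coe_finset]

lemma sum_degSeq (A : Finset (Fin n)) :
    ∑ v ∈ A, degSeq G v = (ecnt G A Finset.univ : ℤ) := by
  simp [degSeq_eq, ecnt]

lemma ecnt_union (A B C : Finset (Fin n)) (h : Disjoint B C) :
    ecnt G A (B ∪ C) = ecnt G A B + ecnt G A C := by
  unfold ecnt
  rw [← Finset.sum_add_distrib]
  refine Finset.sum_congr rfl fun v _ => ?_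
  rw [Finset.filter_union, Finset.card_union_of_disjoint
    (h.mono (Finset.filter_subset _ _) (Finset.filter_subset _ _))]

lemma ecnt_comm (A B : Finset (Fin n)) : ecnt G A B = ecnt G B A := by
  unfold ecnt
  simp_rw [Finset.card_filter]
  rw [Finset.sum_comm]
  refine Finset.sum_congr rfl fun v _ => Finset.sum_congr rfl fun w _ => ?_
  by_cases h : G.Adj w v
  · simp [h, h.symm]
  · have h' : ¬ G.Adj v w := fun hh => h hh.symm
    simp [h, h']

lemma ecnt_le (A B : Finset (Fin n)) : ecnt G A B ≤ A.card * B.card := by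
  unfold ecnt
  calc ∑ v ∈ A, (B.filter (fun w => G.Adj v w)).card ≤ ∑ _v ∈ A, B.card :=
        Finset.sum_le_sum fun v _ => Finset.card_filter_le _ _
    _ = A.card * B.card := by rw [Finset.sum_const, smul_eq_mul]

lemma filter_adj_subset_erase (A : Finset (Fin n)) (v : Fin n) :
    A.filter (fun w => G.Adj v w) ⊆ A.erase v := by
  intro w hw
  simp only [Finset.mem_filter] at hw
  exact Finset.mem_erase.mpr ⟨fun h => G.irrefl (h ▸ hw.2), hw.1⟩

lemma ecnt_self_le (A : Finset (Fin n)) : ecnt G A A ≤ A.card * (A.card - 1) := by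
  unfold ecnt
  calc ∑ v ∈ A, (A.filter (fun w => G.Adj v w)).card
      ≤ ∑ v ∈ A, (A.erase v).card :=
        Finset.sum_le_sum fun v _ => Finset.card_le_card (filter_adj_subset_erase G A v)
    _ = A.card * (A.card - 1) := by
        rw [Finset.sum_congr rfl fun v hv => Finset.card_erase_of_mem hv,
          Finset.sum_const, smul_eq_mul]

lemma ecnt_self_le' (A : Finset (Fin n)) :
    (ecnt G A A : ℤ) ≤ (A.card : ℤ) * ((A.card : ℤ) - 1) := by
  rcases A.eq_empty_or_nonempty with rfl | h
  · simp [ecnt]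
  · have h1 : 1 ≤ A.card := h.card_pos
    calc (ecnt G A A : ℤ) ≤ ((A.card * (A.card - 1) : ℕ) : ℤ) := by
          exact_mod_cast ecnt_self_le G A
      _ = (A.card : ℤ) * ((A.card : ℤ) - 1) := by
          rw [Nat.cast_mul, Nat.cast_sub h1, Nat.cast_one]

lemma full_of_ecnt_eq {A B : Finset (Fin n)} (h : ecnt G A B = A.card * B.card) :
    ∀ v ∈ A, ∀ w ∈ B, G.Adj v w := by
  by_contra hc
  push_neg at hc
  obtain ⟨v, hv, w, hw, hvw⟩ := hc
  have hlt : ecnt G A B < A.card * B.card := by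
    unfold ecnt
    have h2 : (B.filter (fun x => G.Adj v x)).card < B.card := by
      apply Finset.card_lt_card
      refine ⟨Finset.filter_subset _ _, fun hsub => hvw ?_⟩
      have := hsub hw
      simp only [Finset.mem_filter] at this
      exact this.2
    calc ∑ u ∈ A, (B.filter (fun x => G.Adj u x)).card
        < ∑ _u ∈ A, B.card :=
          Finset.sum_lt_sum (fun u _ => Finset.card_filter_le _ _) ⟨v, hv, h2⟩
      _ = A.card * B.card := by rw [Finset.sum_const, smul_eq_mul]
  omega

lemma clique_of_ecnt_eq {A : Finset (Fin n)} (h : ecnt G A A = A.card * (A.card - 1)) :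
    ∀ v ∈ A, ∀ w ∈ A, v ≠ w → G.Adj v w := by
  by_contra hc
  push_neg at hc
  obtain ⟨v, hv, w, hw, hne, hvw⟩ := hc
  have hlt : ecnt G A A < A.card * (A.card - 1) := by
    unfold ecnt
    have h2 : (A.filter (fun x => G.Adj v x)).card < (A.erase v).card := by
      apply Finset.card_lt_card
      refine ⟨filter_adj_subset_erase G A v, fun hsub => hvw ?_⟩
      have hw' : w ∈ A.erase v := Finset.mem_erase.mpr ⟨hne.symm, hw⟩
      have := hsub hw'
      simp only [Finset.mem_filter] at this
      exact this.2
    calc ∑ u ∈ A, (A.filter (fun x => G.Adj u x)).card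
        < ∑ u ∈ A, (A.erase u).card :=
          Finset.sum_lt_sum
            (fun u _ => Finset.card_le_card (filter_adj_subset_erase G A u)) ⟨v, hv, h2⟩
      _ = A.card * (A.card - 1) := by
          rw [Finset.sum_congr rfl fun u hu => Finset.card_erase_of_mem hu,
            Finset.sum_const, smul_eq_mul]
  omega

lemma not_adj_of_ecnt_zero {A B : Finset (Fin n)} (h : ecnt G A B = 0) :
    ∀ v ∈ A, ∀ w ∈ B, ¬ G.Adj v w := by
  intro v hv w hw hadj
  unfold ecnt at h
  rw [Finset.sum_eq_zero_iff] at h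
  have := h v hv
  rw [Finset.card_eq_zero, Finset.filter_eq_empty_iff] at this
  exact this hw hadj

lemma ecnt_eq_of_full {A B : Finset (Fin n)} (h : ∀ v ∈ A, ∀ w ∈ B, G.Adj v w) :
    ecnt G A B = A.card * B.card := by
  unfold ecnt
  rw [Finset.sum_congr rfl fun v hv => by
    rw [Finset.filter_true_of_mem (fun w hw => h v hv w hw)]]
  rw [Finset.sum_const, smul_eq_mul]

lemma ecnt_eq_of_clique {A : Finset (Fin n)} (h : ∀ v ∈ A, ∀ w ∈ A, v ≠ w → G.Adj v w) :
    ecnt G A A = A.card * (A.card - 1) := by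
  unfold ecnt
  have key : ∀ v ∈ A, (A.filter (fun w => G.Adj v w)) = A.erase v := by
    intro v hv
    apply Finset.Subset.antisymm (filter_adj_subset_erase G A v)
    intro w hw
    rw [Finset.mem_erase] at hw
    exact Finset.mem_filter.mpr ⟨hw.2, h v hv w hw.2 (Ne.symm hw.1)⟩
  rw [Finset.sum_congr rfl fun v hv => by rw [key v hv],
    Finset.sum_congr rfl fun v hv => Finset.card_erase_of_mem hv,
    Finset.sum_const, smul_eq_mul]

lemma ecnt_eq_zero {A B : Finset (Fin n)} (h : ∀ v ∈ A, ∀ w ∈ B, ¬ G.Adj v w) :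
    ecnt G A B = 0 := by
  unfold ecnt
  refine Finset.sum_eq_zero fun v hv => ?_
  rw [Finset.card_eq_zero, Finset.filter_eq_empty_iff]
  exact fun w hw => h v hv w hw

lemma key_identity (S T : Finset (Fin n)) (hST : Disjoint S T) :
    ∑ v ∈ S, degSeq G v - ∑ v ∈ T, degSeq G v =
      (ecnt G S S : ℤ) + (ecnt G S ((S ∪ T)ᶜ) : ℤ)
        - (ecnt G T T : ℤ) - (ecnt G T ((S ∪ T)ᶜ) : ℤ) := by
  set O := (S ∪ T)ᶜ with hO
  have hU : S ∪ T ∪ O = Finset.univ := Finset.union_compl _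
  have hd1 : Disjoint (S ∪ T) O := disjoint_compl_right
  have splitS : ecnt G S Finset.univ = ecnt G S S + ecnt G S T + ecnt G S O := by
    rw [← hU, ecnt_union G S _ _ hd1, ecnt_union G S S T hST]
  have splitT : ecnt G T Finset.univ = ecnt G T S + ecnt G T T + ecnt G T O := by
    rw [← hU, ecnt_union G T _ _ hd1, ecnt_union G T S T hST]
  rw [sum_degSeq, sum_degSeq, splitS, splitT, ecnt_comm G T S]
  push_cast
  ring

lemma card_compl_union (S T : Finset (Fin n)) (hST : Disjoint S T) :
    (((S ∪ T)ᶜ).card : ℤ) = (n : ℤ) - S.card - T.card := by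
  have h1 : (S ∪ T)ᶜ.card = n - (S ∪ T).card := by
    rw [Finset.card_compl]; simp
  have h2 : (S ∪ T).card = S.card + T.card := Finset.card_union_of_disjoint hST
  have h3 : (S ∪ T).card ≤ n := by
    have := Finset.card_le_univ (S ∪ T); simpa using this
  omega

end Aux

/-- A degree sequence of a simple graph on `[n]`, `n ≥ 2`, is tight iff it is the degree
sequence of a weakly split graph. -/
theorem tight_iff_weaklySplit (n : ℕ) (hn : 2 ≤ n) (d : Fin n → ℤ)
    (hd : ∃ G : SimpleGraph (Fin n), degSeq G = d) :
    Tight n d ↔ ∃ G : SimpleGraph (Fin n), WeaklySplit G ∧ degSeq G = d := by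
  constructor
  · rintro ⟨S, T, hST, hSTne, heq⟩
    obtain ⟨G, rfl⟩ := hd
    set O := (S ∪ T)ᶜ with hO
    have hid := key_identity G S T hST
    have hcard := card_compl_union S T hST
    have b1 := ecnt_self_le' G S
    have b2 : (ecnt G S O : ℤ) ≤ (S.card : ℤ) * (O.card : ℤ) := by
      exact_mod_cast ecnt_le G S O
    have b3 : (0 : ℤ) ≤ (ecnt G T T : ℤ) := Int.natCast_nonneg _
    have b4 : (0 : ℤ) ≤ (ecnt G T O : ℤ) := Int.natCast_nonneg _
    rw [heq] at hid
    have hrhs : (S.card : ℤ) * ((n : ℤ) - T.card - 1)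
        = (S.card : ℤ) * ((S.card : ℤ) - 1) + (S.card : ℤ) * (O.card : ℤ) := by
      rw [hcard]; ring
    have e1 : (ecnt G S S : ℤ) = (S.card : ℤ) * ((S.card : ℤ) - 1) := by linarith
    have e2 : (ecnt G S O : ℤ) = (S.card : ℤ) * (O.card : ℤ) := by linarith
    have e3 : ecnt G T T = 0 := by
      have : (ecnt G T T : ℤ) = 0 := by linarith
      exact_mod_cast this
    have e4 : ecnt G T O = 0 := by
      have : (ecnt G T O : ℤ) = 0 := by linarith
      exact_mod_cast this
    have hclique : ∀ v ∈ S, ∀ w ∈ S, v ≠ w → G.Adj v w := by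
      apply clique_of_ecnt_eq
      rcases S.eq_empty_or_nonempty with rfl | hne
      · simp [ecnt]
      · have h1 : 1 ≤ S.card := hne.card_pos
        have : (ecnt G S S : ℤ) = ((S.card * (S.card - 1) : ℕ) : ℤ) := by
          rw [e1, Nat.cast_mul, Nat.cast_sub h1, Nat.cast_one]
        exact_mod_cast this
    have hfull : ∀ v ∈ S, ∀ w ∈ O, G.Adj v w := by
      apply full_of_ecnt_eq
      exact_mod_cast e2
    have hTT := not_adj_of_ecnt_zero G e3
    have hTO := not_adj_of_ecnt_zero G e4
    refine ⟨G, ⟨S, T, O, hST,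
      disjoint_compl_right.mono_left Finset.subset_union_left,
      disjoint_compl_right.mono_left Finset.subset_union_right,
      Finset.union_compl _, hSTne, hclique, hTT,
      fun o ho c hc => (hfull c hc o ho).symm,
      fun o ho i hi hadj => hTO i hi o ho hadj.symm⟩, rfl⟩
  · rintro ⟨G, ⟨Vc, Vi, Vo, hci, hco, hio, huniv, hne, hclique, hindep, hoc, hoi⟩, rfl⟩
    refine ⟨Vc, Vi, hci, hne, ?_⟩
    have hVo : Vo = (Vc ∪ Vi)ᶜ := by
      ext x
      simp only [Finset.mem_compl, Finset.mem_union]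
      constructor
      · intro hx
        push_neg
        exact ⟨fun hc => Finset.disjoint_left.mp hco hc hx,
               fun hi => Finset.disjoint_left.mp hio hi hx⟩
      · intro hx
        have hx' : x ∈ Vc ∪ Vi ∪ Vo := huniv ▸ Finset.mem_univ x
        simp only [Finset.mem_union] at hx'
        push_neg at hx
        tauto
    have hid := key_identity G Vc Vi hci
    have hcard : ((Vo : Finset (Fin n)).card : ℤ) = (n : ℤ) - Vc.card - Vi.card := by
      rw [hVo]; exact card_compl_union Vc Vi hci
    rw [hid, ← hVo]
    have e1 : ecnt G Vc Vc = Vc.card * (Vc.card - 1) := ecnt_eq_of_clique G hclique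
    have e2 : ecnt G Vc Vo = Vc.card * Vo.card :=
      ecnt_eq_of_full G (fun v hv w hw => (hoc w hw v hv).symm)
    have e3 : ecnt G Vi Vi = 0 := ecnt_eq_zero G hindep
    have e4 : ecnt G Vi Vo = 0 :=
      ecnt_eq_zero G (fun v hv w hw hadj => hoi w hw v hv hadj.symm)
    rw [e1, e2, e3, e4]
    rcases Vc.eq_empty_or_nonempty with rfl | hneVc
    · simp
    · have h1 : 1 ≤ Vc.card := hneVc.card_pos
      rw [Nat.cast_mul, Nat.cast_mul, Nat.cast_sub h1, Nat.cast_one]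
      rw [hcard]  -- substitute Vo.card? hcard is about Vo.card
      ring
end

section
/- For a vector d = (d_1,…,d_n) ∈ ℤ^n, there exists a simple digraph D on vertex set [n] with net-degree sequence ds(D) = d if and only if d_1 + ⋯ + d_n = 0 and Σ_{i∈I} d_i ≤ |I|·(n − |I|) for every nonempty proper subset I ⊊ [n]. -/
/-- A simple digraph on vertex set `Fin n`: a set of arcs (ordered pairs of distinct
vertices) such that for each unordered pair at most one orientation is present. -/
structure Digraph' (n : ℕ) where
  arcs : Finset (Fin n × Fin n)
  oneWay : ∀ u v : Fin n, (u, v) ∈ arcs → (v, u) ∉ arcs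

/-- The net-degree of a node `v`: in-degree minus out-degree. -/
def Digraph'.netDeg {n : ℕ} (D : Digraph' n) (v : Fin n) : ℤ :=
  ((D.arcs.filter fun p => p.2 = v).card : ℤ) - ((D.arcs.filter fun p => p.1 = v).card : ℤ)

/-!
Every ordered pair `(x, y)` of vertices is a token, which an arc set `A` hands to `y` if
`(x, y) ∈ A` and to `x` otherwise. Vertex `v` then receives `d v + n` tokens exactly when `A` has
net-degree `d v` at `v`, so realizing `d` by an arc set is an assignment problem. By Hall's
theorem it is solvable as soon as the `#J ^ 2` tokens with both ends in `J` never outnumber the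
`∑ v ∈ J, (d v + n)` slots of `J`, and this is the cut condition for `Jᶜ`. Loops and 2-cycles of
the resulting arc set can then be deleted without changing any net-degree.
-/

open Finset

lemma Finset.sum_card_filter_eq {ι M : Type*} [DecidableEq M] (s : Finset ι) (f : ι → M)
    (t : Finset M) : ∑ b ∈ t, #{a ∈ s | f a = b} = #{a ∈ s | f a ∈ t} := by
  rw [card_eq_sum_card_fiberwise (f := f) (s := {a ∈ s | f a ∈ t}) (t := t)
    (fun a ha => (mem_filter.1 ha).2)]
  refine sum_congr rfl fun b hb => ?_
  rw [filter_filter]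
  exact congrArg card (filter_congr fun a _ => by constructor <;> aesop)

section

variable {V : Type*} [DecidableEq V]

def netDegree (A : Finset (V × V)) (v : V) : ℤ :=
  (#{p ∈ A | p.2 = v} : ℤ) - #{p ∈ A | p.1 = v}

lemma sum_netDegree (A : Finset (V × V)) (I : Finset V) :
    ∑ v ∈ I, netDegree A v =
      (#{p ∈ A | p.1 ∉ I ∧ p.2 ∈ I} : ℤ) - #{p ∈ A | p.1 ∈ I ∧ p.2 ∉ I} := by
  have hin :
      #{p ∈ A | p.2 ∈ I} = #{p ∈ A | p.1 ∈ I ∧ p.2 ∈ I} + #{p ∈ A | p.1 ∉ I ∧ p.2 ∈ I} := by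
    rw [← card_filter_add_card_filter_not (s := {p ∈ A | p.2 ∈ I}) (·.1 ∈ I),
      filter_filter, filter_filter]
    simp only [and_comm]
  have hout :
      #{p ∈ A | p.1 ∈ I} = #{p ∈ A | p.1 ∈ I ∧ p.2 ∈ I} + #{p ∈ A | p.1 ∈ I ∧ p.2 ∉ I} := by
    rw [← card_filter_add_card_filter_not (s := {p ∈ A | p.1 ∈ I}) (·.2 ∈ I),
      filter_filter, filter_filter]
  simp only [netDegree, sum_sub_distrib]
  rw [← Nat.cast_sum, ← Nat.cast_sum, sum_card_filter_eq, sum_card_filter_eq]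
  omega

lemma netDegree_filter_swap_notMem (A : Finset (V × V)) :
    netDegree {p ∈ A | p.swap ∉ A} = netDegree A := by
  funext v
  have split (f : V × V → V) : #{p ∈ A | f p = v} =
      #{p ∈ {p ∈ A | p.swap ∉ A} | f p = v} + #{p ∈ A | p.swap ∈ A ∧ f p = v} := by
    rw [← card_filter_add_card_filter_not (s := {p ∈ A | f p = v}) (·.swap ∉ A),
      filter_filter, filter_filter, filter_filter]
    simp only [not_not, and_comm]
  have hsymm : #{p ∈ A | p.swap ∈ A ∧ p.2 = v} = #{p ∈ A | p.swap ∈ A ∧ p.1 = v} :=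
    card_nbij' Prod.swap Prod.swap (fun p hp => by simp_all) (fun p hp => by simp_all)
      (fun _ _ => rfl) (fun _ _ => rfl)
  simp only [netDegree]
  have := split (·.2)
  have := split (·.1)
  omega

variable [Fintype V]

lemma sum_netDegree_univ (A : Finset (V × V)) : ∑ v, netDegree A v = 0 := by
  simp [sum_netDegree]

lemma sum_netDegree_le (A : Finset (V × V)) (I : Finset V) :
    ∑ v ∈ I, netDegree A v ≤ #I * (Fintype.card V - #I : ℤ) := by
  have hcut : #{p ∈ A | p.1 ∉ I ∧ p.2 ∈ I} ≤ #(Iᶜ ×ˢ I) :=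
    card_le_card fun p hp => by simp_all
  have hcut' := (Nat.cast_le (α := ℤ)).2 hcut
  rw [card_product, card_compl, Nat.cast_mul, Nat.cast_sub (card_le_univ I)] at hcut'
  rw [sum_netDegree]
  linarith

lemma netDegree_filter_owner_eq_snd (owner : V × V → V)
    (howner : ∀ p, owner p = p.1 ∨ owner p = p.2) (v : V) :
    netDegree {p | owner p = p.2} v = #{p | owner p = v} - Fintype.card V := by
  have hrow : #{p : V × V | p.1 = v} = Fintype.card V := by
    rw [← card_univ]
    exact card_nbij' Prod.snd (v, ·) (by simp) (by simp) (fun p hp => by ext <;> simp_all)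
      (fun _ _ => rfl)
  have hsplit (P : V × V → Prop) [DecidablePred P] :
      #{p | P p} = #{p | owner p = p.2 ∧ P p} + #{p | P p ∧ owner p ≠ p.2} := by
    rw [← card_filter_add_card_filter_not (s := {p | P p}) (fun p => owner p = p.2),
      filter_filter, filter_filter]
    exact congrArg (· + _) (congrArg card (filter_congr fun _ _ => and_comm))
  have hout : #{p | p.1 = v ∧ owner p ≠ p.2} = #{p | owner p = v ∧ owner p ≠ p.2} := by
    congr 1
    refine filter_congr fun p _ => ?_
    rcases howner p with h | h
    · rw [h]
    · simp [h]
  have hin : #{p | owner p = p.2 ∧ p.2 = v} = #{p | owner p = p.2 ∧ owner p = v} := by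
    congr 1
    exact filter_congr fun p _ => and_congr_right fun h => by rw [h]
  have := hsplit (·.1 = v)
  have := hsplit (fun p => owner p = v)
  simp only [netDegree, filter_filter]
  omega

lemma exists_owner_card_eq (c : V → ℕ) (hc : ∀ J : Finset V, #J * #J ≤ ∑ v ∈ J, c v)
    (htot : ∑ v, c v = Fintype.card V * Fintype.card V) :
    ∃ owner : V × V → V,
      (∀ p, owner p = p.1 ∨ owner p = p.2) ∧ ∀ v, #{p | owner p = v} = c v := by
  have hall (s : Finset (V × V)) :
      #s ≤ #{σ : Σ v, Fin (c v) | ∃ p ∈ s, σ.1 = p.1 ∨ σ.1 = p.2} := by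
    set J := s.image Prod.fst ∪ s.image Prod.snd
    calc #s ≤ #(J ×ˢ J) := card_le_card fun p hp => by
            simp only [J, mem_product, mem_union, mem_image]
            exact ⟨.inl ⟨p, hp, rfl⟩, .inr ⟨p, hp, rfl⟩⟩
      _ ≤ ∑ v ∈ J, c v := card_product J J ▸ hc J
      _ = #(J.sigma fun v => univ) := by simp
      _ ≤ _ := card_le_card fun σ hσ => by
            simp only [J, mem_sigma, mem_union, mem_image] at hσ
            simp only [mem_filter, mem_univ, true_and]
            obtain ⟨⟨p, hp, h⟩ | ⟨p, hp, h⟩, -⟩ := hσ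
            exacts [⟨p, hp, .inl h.symm⟩, ⟨p, hp, .inr h.symm⟩]
  obtain ⟨f, hf, howner⟩ := (Fintype.all_card_le_filter_rel_iff_exists_injective _).1 hall
  refine ⟨fun p => (f p).1, howner, ?_⟩
  have hle (v : V) : #{p | (f p).1 = v} ≤ c v :=
    calc #{p | (f p).1 = v} ≤ #(({v} : Finset V).sigma fun v => univ) :=
          card_le_card_of_injOn f (fun p hp => by simp_all) hf.injOn
      _ = c v := by simp
  have hsum : ∑ v, #{p | (f p).1 = v} = ∑ v, c v := by
    rw [htot, ← card_eq_sum_card_fiberwise (fun _ _ => mem_univ _), card_univ, Fintype.card_prod]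
  exact fun v => (sum_eq_sum_iff_of_le fun v _ => hle v).1 hsum v (mem_univ v)

lemma sq_card_le_sum_add_card {d : V → ℤ} (h0 : ∑ v, d v = 0)
    (hcut : ∀ I : Finset V, I.Nonempty → I ≠ univ →
      ∑ i ∈ I, d i ≤ #I * (Fintype.card V - #I : ℤ)) (J : Finset V) :
    (#J * #J : ℤ) ≤ ∑ v ∈ J, (d v + Fintype.card V) := by
  rw [sum_add_distrib, sum_const, nsmul_eq_mul]
  by_cases huniv : J = univ
  · subst huniv
    simp [h0]
  obtain rfl | hJ := J.eq_empty_or_nonempty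
  · simp
  have hcompl := hcut Jᶜ (by rwa [nonempty_iff_ne_empty, Ne, compl_eq_empty_iff])
    ((compl_ne_univ_iff_nonempty J).2 hJ)
  rw [card_compl, Nat.cast_sub (card_le_univ J)] at hcompl
  have hsum : ∑ v ∈ J, d v + ∑ v ∈ Jᶜ, d v = 0 := by rw [sum_add_sum_compl, h0]
  nlinarith

lemma exists_netDegree_eq {d : V → ℤ} (h0 : ∑ v, d v = 0)
    (hcut : ∀ I : Finset V, I.Nonempty → I ≠ univ →
      ∑ i ∈ I, d i ≤ #I * (Fintype.card V - #I : ℤ)) :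
    ∃ A : Finset (V × V), netDegree A = d := by
  have hhall := sq_card_le_sum_add_card h0 hcut
  have hcap (v : V) : ((d v + Fintype.card V).toNat : ℤ) = d v + Fintype.card V := by
    have := hhall {v}
    simp only [card_singleton, sum_singleton, Nat.cast_one, one_mul] at this
    exact Int.toNat_of_nonneg (by linarith)
  obtain ⟨owner, howner, hcard⟩ := exists_owner_card_eq (fun v => (d v + Fintype.card V).toNat)
    (fun J => by zify; simpa only [hcap] using hhall J)
    (by zify; simp [hcap, sum_add_distrib, h0])
  refine ⟨({p | owner p = p.2} : Finset (V × V)), funext fun v => ?_⟩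
  rw [netDegree_filter_owner_eq_snd owner howner, hcard, hcap]
  ring

end

def Digraph'.ofArcs {n : ℕ} (A : Finset (Fin n × Fin n)) : Digraph' n where
  arcs := {p ∈ A | p.swap ∉ A}
  oneWay _ _ huv hvu := (mem_filter.1 huv).2 (mem_filter.1 hvu).1

lemma Digraph'.netDeg_eq_netDegree {n : ℕ} (D : Digraph' n) : D.netDeg = netDegree D.arcs := rfl

/-- Erdős–Gallai-type theorem for digraphs: `d ∈ ℤ^n` is the net-degree sequence of a
simple digraph iff the entries sum to zero and `∑_{i ∈ I} d i ≤ |I| (n - |I|)` for every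
nonempty proper subset `I`. -/
theorem netDegree_sequence_digraph_iff (n : ℕ) (d : Fin n → ℤ) :
    (∃ D : Digraph' n, D.netDeg = d) ↔
      (∑ i, d i = 0 ∧
        ∀ I : Finset (Fin n), I.Nonempty → I ≠ Finset.univ →
          ∑ i ∈ I, d i ≤ (I.card : ℤ) * ((n : ℤ) - I.card)) := by
  constructor
  · rintro ⟨D, rfl⟩
    rw [D.netDeg_eq_netDegree]
    exact ⟨sum_netDegree_univ D.arcs, fun I _ _ => by
      simpa only [Fintype.card_fin] using sum_netDegree_le D.arcs I⟩
  · rintro ⟨h0, hcut⟩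
    obtain ⟨A, hA⟩ := exists_netDegree_eq h0 (by simpa using hcut)
    exact ⟨Digraph'.ofArcs A, (netDegree_filter_swap_notMem A).trans hA⟩
end

section
/- Let d ∈ ℤ^n be the net-degree sequence of some simple digraph on vertex set [n]. Then there exists a nonempty proper subset I ⊊ [n] with Σ_{i∈I} d_i = |I|·(n − |I|) if and only if d is the net-degree sequence of a weakly split digraph on [n]. -/
/-- A digraph is weakly split if its vertex set can be partitioned into two nonempty
parts `V_s`, `V_t` such that every arc from `V_s` to `V_t` is present. -/
def Digraph'.WeaklySplit {n : ℕ} (D : Digraph' n) : Prop :=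
  ∃ Vs Vt : Finset (Fin n), Vs.Nonempty ∧ Vt.Nonempty ∧ Disjoint Vs Vt ∧
    Vs ∪ Vt = Finset.univ ∧ ∀ s ∈ Vs, ∀ t ∈ Vt, (s, t) ∈ D.arcs

open Finset

private lemma fiber_card {n : ℕ} (A : Finset (Fin n × Fin n)) (I : Finset (Fin n))
    (f : Fin n × Fin n → Fin n) :
    ((A.filter fun p => f p ∈ I).card : ℤ)
      = ∑ v ∈ I, ((A.filter fun p => f p = v).card : ℤ) := by
  have h : (A.filter fun p => f p ∈ I).card
      = ∑ v ∈ I, ((A.filter fun p => f p ∈ I).filter fun p => f p = v).card :=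
    Finset.card_eq_sum_card_fiberwise (fun x hx => (mem_filter.mp hx).2)
  have h2 : ∀ v ∈ I, ((A.filter fun p => f p ∈ I).filter fun p => f p = v)
      = A.filter fun p => f p = v := by
    intro v hv
    rw [Finset.filter_filter]
    apply Finset.filter_congr
    intro p _
    constructor
    · exact fun h => h.2
    · exact fun h => ⟨h ▸ hv, h⟩
  rw [h]
  push_cast
  exact Finset.sum_congr rfl (fun v hv => by rw [h2 v hv])

private lemma sum_netDeg_eq {n : ℕ} (D : Digraph' n) (I : Finset (Fin n)) :
    ∑ v ∈ I, D.netDeg v =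
      ((D.arcs.filter fun p => p.1 ∉ I ∧ p.2 ∈ I).card : ℤ)
      - ((D.arcs.filter fun p => p.1 ∈ I ∧ p.2 ∉ I).card : ℤ) := by
  have hin := fiber_card D.arcs I (fun p => p.2)
  have hout := fiber_card D.arcs I (fun p => p.1)
  have hsum : ∑ v ∈ I, D.netDeg v
      = ((D.arcs.filter fun p => p.2 ∈ I).card : ℤ)
        - ((D.arcs.filter fun p => p.1 ∈ I).card : ℤ) := by
    unfold Digraph'.netDeg
    rw [Finset.sum_sub_distrib, hin, hout]
  have hsplit2 : (D.arcs.filter fun p => p.2 ∈ I).card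
      = ((D.arcs.filter fun p => p.2 ∈ I).filter fun p => p.1 ∈ I).card
        + ((D.arcs.filter fun p => p.2 ∈ I).filter fun p => ¬ p.1 ∈ I).card :=
    (Finset.card_filter_add_card_filter_not _).symm
  have hsplit1 : (D.arcs.filter fun p => p.1 ∈ I).card
      = ((D.arcs.filter fun p => p.1 ∈ I).filter fun p => p.2 ∈ I).card
        + ((D.arcs.filter fun p => p.1 ∈ I).filter fun p => ¬ p.2 ∈ I).card :=
    (Finset.card_filter_add_card_filter_not _).symm
  rw [hsum, hsplit2, hsplit1]
  simp only [Finset.filter_filter]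
  have e1 : (D.arcs.filter fun p => p.2 ∈ I ∧ p.1 ∈ I)
      = D.arcs.filter fun p => p.1 ∈ I ∧ p.2 ∈ I := by
    apply Finset.filter_congr; intro p _; exact and_comm
  have e2 : (D.arcs.filter fun p => p.2 ∈ I ∧ ¬ p.1 ∈ I)
      = D.arcs.filter fun p => p.1 ∉ I ∧ p.2 ∈ I := by
    apply Finset.filter_congr; intro p _; exact and_comm
  have e3 : (D.arcs.filter fun p => p.1 ∈ I ∧ ¬ p.2 ∈ I)
      = D.arcs.filter fun p => p.1 ∈ I ∧ p.2 ∉ I := by rfl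
  rw [e1, e2, e3]
  push_cast
  ring

/-- A net-degree sequence `d` of a simple digraph attains equality
`∑_{i ∈ I} d i = |I| (n - |I|)` for some nonempty proper subset `I` iff `d` is the
net-degree sequence of a weakly split digraph. -/
theorem tight_netDegree_iff_weaklySplit (n : ℕ) (d : Fin n → ℤ)
    (hd : ∃ D : Digraph' n, D.netDeg = d) :
    (∃ I : Finset (Fin n), I.Nonempty ∧ I ≠ Finset.univ ∧
        ∑ i ∈ I, d i = (I.card : ℤ) * ((n : ℤ) - I.card)) ↔
      ∃ D : Digraph' n, D.WeaklySplit ∧ D.netDeg = d := by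
  constructor
  · rintro ⟨I, hne, hproper, hsum⟩
    obtain ⟨D, hD⟩ := hd
    refine ⟨D, ?_, hD⟩
    -- show D is weakly split with Vs = Iᶜ, Vt = I
    have hcompl : Iᶜ.card + I.card = n := by
      have := Finset.card_add_card_compl I
      simp only [Fintype.card_fin] at this; omega
    have hsub : (D.arcs.filter fun p => p.1 ∉ I ∧ p.2 ∈ I) ⊆ Iᶜ ×ˢ I := by
      intro p hp
      rw [Finset.mem_filter] at hp
      rw [Finset.mem_product]
      exact ⟨Finset.mem_compl.mpr hp.2.1, hp.2.2⟩
    have hcard_le : (D.arcs.filter fun p => p.1 ∉ I ∧ p.2 ∈ I).card ≤ Iᶜ.card * I.card := by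
      simpa [Finset.card_product] using Finset.card_le_card hsub
    have hkey := sum_netDeg_eq D I
    rw [hD, hsum] at hkey
    have hIle : I.card ≤ n := by
      simpa [Fintype.card_fin] using Finset.card_le_univ I
    have hbound : (I.card : ℤ) * ((n : ℤ) - I.card) = (Iᶜ.card : ℤ) * I.card := by
      have : (Iᶜ.card : ℤ) + I.card = n := by exact_mod_cast hcompl
      nlinarith [this]
    rw [hbound] at hkey
    have hm : ((Iᶜ.card * I.card : ℕ) : ℤ)
        = ((D.arcs.filter fun p => p.1 ∉ I ∧ p.2 ∈ I).card : ℤ)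
          - ((D.arcs.filter fun p => p.1 ∈ I ∧ p.2 ∉ I).card : ℤ) := by
      push_cast
      linarith [hkey]
    have hz : (D.arcs.filter fun p => p.1 ∈ I ∧ p.2 ∉ I).card = 0 ∧
        (D.arcs.filter fun p => p.1 ∉ I ∧ p.2 ∈ I).card = Iᶜ.card * I.card := by
      omega
    have hfull : (D.arcs.filter fun p => p.1 ∉ I ∧ p.2 ∈ I) = Iᶜ ×ˢ I := by
      apply Finset.eq_of_subset_of_card_le hsub
      rw [Finset.card_product]
      omega
    refine ⟨Iᶜ, I, ?_, hne, disjoint_compl_left, ?_, ?_⟩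
    · rw [Finset.nonempty_iff_ne_empty]
      simpa using hproper
    · rw [Finset.union_comm, Finset.union_compl]
    intro s hs t ht
    have hmem : (s, t) ∈ (D.arcs.filter fun p => p.1 ∉ I ∧ p.2 ∈ I) := by
      rw [hfull, Finset.mem_product]
      exact ⟨hs, ht⟩
    exact (Finset.filter_subset _ _) hmem
  · rintro ⟨D, ⟨Vs, Vt, hVs, hVt, hdisj, huniv, harcs⟩, hD⟩
    refine ⟨Vt, hVt, ?_, ?_⟩
    · obtain ⟨s, hs⟩ := hVs
      intro h
      exact (Finset.disjoint_left.mp hdisj hs) (h ▸ Finset.mem_univ s)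
    · have hcard : Vs.card + Vt.card = n := by
        have := Finset.card_union_of_disjoint hdisj
        rw [huniv] at this
        simpa [Fintype.card_fin] using this.symm
      have hfull : (D.arcs.filter fun p => p.1 ∉ Vt ∧ p.2 ∈ Vt) = Vs ×ˢ Vt := by
        ext p
        rw [Finset.mem_filter, Finset.mem_product]
        constructor
        · rintro ⟨hp, h1, h2⟩
          refine ⟨?_, h2⟩
          have : p.1 ∈ Vs ∪ Vt := huniv ▸ Finset.mem_univ p.1
          rcases Finset.mem_union.mp this with h | h
          · exact h
          · exact absurd h h1
        · rintro ⟨h1, h2⟩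
          exact ⟨harcs p.1 h1 p.2 h2, Finset.disjoint_left.mp hdisj h1, h2⟩
      have hempty : (D.arcs.filter fun p => p.1 ∈ Vt ∧ p.2 ∉ Vt) = ∅ := by
        rw [Finset.eq_empty_iff_forall_notMem]
        rintro p hp
        rw [Finset.mem_filter] at hp
        obtain ⟨hp, h1, h2⟩ := hp
        have hp2s : p.2 ∈ Vs := by
          have : p.2 ∈ Vs ∪ Vt := huniv ▸ Finset.mem_univ p.2
          rcases Finset.mem_union.mp this with h | h
          · exact h
          · exact absurd h h2
        have := harcs p.2 hp2s p.1 h1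
        exact D.oneWay p.2 p.1 this (by simpa using hp)
      have := sum_netDeg_eq D Vt
      rw [hD, hfull, hempty] at this
      rw [this]
      simp [Finset.card_product]
      have : (Vs.card : ℤ) + Vt.card = n := by exact_mod_cast hcard
      nlinarith [this]
end

section
/- Two simple digraphs D_1 = ([n],A_1) and D_2 = ([n],A_2) have the same net-degree sequence if and only if D_1 can be transformed into D_2 by a finite sequence of Δ- and Λ-operations. -/
/-- Two nodes are adjacent if they are joined by an arc in some direction. -/
def Digraph'.Adj {n : ℕ} (D : Digraph' n) (u v : Fin n) : Prop :=
  (u, v) ∈ D.arcs ∨ (v, u) ∈ D.arcs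

/-- Adding a directed triangle on three pairwise non-adjacent nodes. -/
def DeltaAdd {n : ℕ} (D D' : Digraph' n) : Prop :=
  ∃ u v w : Fin n, u ≠ v ∧ v ≠ w ∧ u ≠ w ∧
    ¬ D.Adj u v ∧ ¬ D.Adj v w ∧ ¬ D.Adj u w ∧
    D'.arcs = D.arcs ∪ {(u, v), (v, w), (w, u)}

/-- Replacing an arc `(u,w)` by the two arcs `(u,v)`, `(v,w)` where `v` is a node
adjacent to neither `u` nor `w`. -/
def LambdaSub {n : ℕ} (D D' : Digraph' n) : Prop :=
  ∃ u v w : Fin n, v ≠ u ∧ v ≠ w ∧ (u, w) ∈ D.arcs ∧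
    ¬ D.Adj u v ∧ ¬ D.Adj v w ∧
    D'.arcs = (D.arcs.erase (u, w)) ∪ {(u, v), (v, w)}

/-- A single Δ- or Λ-operation (in either direction). -/
def DigraphMove {n : ℕ} (D D' : Digraph' n) : Prop :=
  DeltaAdd D D' ∨ DeltaAdd D' D ∨ LambdaSub D D' ∨ LambdaSub D' D

namespace NetDegAux

variable {n : ℕ}

/-- elementary antisymmetric indicator: +1 at (a,b), -1 at (b,a). -/
def e (a b u v : Fin n) : ℤ :=
  (if (u, v) = (a, b) then 1 else 0) - (if (v, u) = (a, b) then 1 else 0)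

/-- triangle circulation on a,b,c -/
def tri (a b c u v : Fin n) : ℤ := e a b u v + e b c u v + e c a u v

lemma e_swap_uv (a b u v : Fin n) : e a b v u = - e a b u v := by
  simp [e]

lemma pair_swap (a b u v : Fin n) :
    (if (v, u) = (a, b) then (1:ℤ) else 0) = (if (u, v) = (b, a) then 1 else 0) := by
  by_cases h : (v, u) = (a, b)
  · rw [Prod.mk.injEq] at h
    obtain ⟨rfl, rfl⟩ := h
    simp
  · rw [if_neg h, if_neg]
    intro hc
    rw [Prod.mk.injEq] at hc h
    exact h ⟨hc.2, hc.1⟩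

lemma e_swap_args (a b u v : Fin n) : e b a u v = - e a b u v := by
  unfold e
  rw [pair_swap a b u v, pair_swap b a u v]
  ring

lemma e_eval {a b : Fin n} (hab : a ≠ b) : e a b a b = 1 := by
  unfold e
  rw [if_pos rfl, if_neg]
  · ring
  · intro hc
    rw [Prod.mk.injEq] at hc
    exact hab hc.2

lemma e_ne {a b u v : Fin n} (h1 : (u, v) ≠ (a, b)) (h2 : (u, v) ≠ (b, a)) :
    e a b u v = 0 := by
  unfold e
  rw [pair_swap a b u v, if_neg h1, if_neg h2]
  ring

lemma sum_e (a b v : Fin n) :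
    ∑ u : Fin n, e a b u v = (if v = b then (1:ℤ) else 0) - (if v = a then 1 else 0) := by
  unfold e
  rw [Finset.sum_sub_distrib]
  congr 1
  · simp only [Prod.mk.injEq, ite_and]
    rw [Finset.sum_ite_eq' Finset.univ a (fun _ => if v = b then (1:ℤ) else 0)]
    simp
  · simp only [Prod.mk.injEq]
    by_cases hv : v = a
    · subst hv
      simp only [true_and]
      rw [Finset.sum_ite_eq' Finset.univ b (fun _ => (1:ℤ))]
      simp
    · simp [hv]


lemma tri_swap_uv (a b c u v : Fin n) : tri a b c v u = - tri a b c u v := by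
  unfold tri
  rw [e_swap_uv a b, e_swap_uv b c, e_swap_uv c a]
  ring

lemma tri_rot (a b c u v : Fin n) : tri b c a u v = tri a b c u v := by
  unfold tri; ring

lemma tri_rev (a b c u v : Fin n) : tri c b a u v = - tri a b c u v := by
  unfold tri
  rw [e_swap_args c b, e_swap_args b a, e_swap_args a c]
  ring

lemma sum_tri (a b c v : Fin n) : ∑ u : Fin n, tri a b c u v = 0 := by
  unfold tri
  rw [Finset.sum_add_distrib, Finset.sum_add_distrib, sum_e, sum_e, sum_e]
  split_ifs <;> ring

section evals
variable {a b c : Fin n} (hab : a ≠ b) (hbc : b ≠ c) (hac : a ≠ c)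
include hab hbc hac

lemma tri_ab : tri a b c a b = 1 := by
  unfold tri
  rw [e_eval hab]
  rw [e_ne (a := b) (b := c) (u := a) (v := b), e_ne (a := c) (b := a) (u := a) (v := b)]
  · ring
  all_goals intro h; rw [Prod.mk.injEq] at h
  · exact hac h.1
  · exact hbc h.2
  · exact hab h.1
  · exact hac h.1

lemma tri_bc : tri a b c b c = 1 := by
  have := tri_ab hbc hac.symm ?_
  · rw [tri_rot] at this; exact this
  · exact hab.symm

lemma tri_ca : tri a b c c a = 1 := by
  have := tri_ab hac.symm hab ?_
  · rw [tri_rot, tri_rot] at this; exact this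
  · exact hbc.symm

lemma tri_ba : tri a b c b a = -1 := by
  rw [tri_swap_uv, tri_ab hab hbc hac]
lemma tri_cb : tri a b c c b = -1 := by
  rw [tri_swap_uv, tri_bc hab hbc hac]
lemma tri_ac : tri a b c a c = -1 := by
  rw [tri_swap_uv, tri_ca hab hbc hac]

end evals

lemma tri_zero {a b c u v : Fin n}
    (h1 : (u,v) ≠ (a,b)) (h2 : (u,v) ≠ (b,a)) (h3 : (u,v) ≠ (b,c))
    (h4 : (u,v) ≠ (c,b)) (h5 : (u,v) ≠ (c,a)) (h6 : (u,v) ≠ (a,c)) :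
    tri a b c u v = 0 := by
  unfold tri
  rw [e_ne h1 h2, e_ne h3 h4, e_ne h5 h6]
  ring

/-! ### The arc-sign function of a digraph -/

def X (D : Digraph' n) (u v : Fin n) : ℤ :=
  (if (u, v) ∈ D.arcs then 1 else 0) - (if (v, u) ∈ D.arcs then 1 else 0)

lemma X_antisymm (D : Digraph' n) (u v : Fin n) : X D v u = - X D u v := by
  unfold X; ring

lemma X_cases (D : Digraph' n) (u v : Fin n) : X D u v = -1 ∨ X D u v = 0 ∨ X D u v = 1 := by
  unfold X
  by_cases h1 : (u, v) ∈ D.arcs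
  · rw [if_pos h1, if_neg (D.oneWay u v h1)]; norm_num
  · by_cases h2 : (v, u) ∈ D.arcs <;> simp [h1, h2]

lemma mem_iff (D : Digraph' n) (u v : Fin n) : (u, v) ∈ D.arcs ↔ X D u v = 1 := by
  unfold X
  by_cases h1 : (u, v) ∈ D.arcs
  · rw [if_pos h1, if_neg (D.oneWay u v h1)]; simp [h1]
  · by_cases h2 : (v, u) ∈ D.arcs <;> simp [h1, h2]

lemma not_adj_iff (D : Digraph' n) (u v : Fin n) : ¬ D.Adj u v ↔ X D u v = 0 := by
  unfold Digraph'.Adj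
  rw [mem_iff, mem_iff]
  have h2 := X_antisymm D u v
  rcases X_cases D u v with h | h | h <;> omega

lemma digraph_ext {D D' : Digraph' n} (h : ∀ u v, X D u v = X D' u v) : D = D' := by
  obtain ⟨A, hA⟩ := D
  obtain ⟨A', hA'⟩ := D'
  simp only [Digraph'.mk.injEq]
  ext ⟨u, v⟩
  have := h u v
  rw [mem_iff ⟨A, hA⟩ u v, mem_iff ⟨A', hA'⟩ u v, this]

lemma netDeg_eq (D : Digraph' n) (v : Fin n) : D.netDeg v = ∑ u : Fin n, X D u v := by
  unfold Digraph'.netDeg X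
  rw [Finset.sum_sub_distrib]
  congr 1
  · have himg : (D.arcs.filter fun p => p.2 = v)
        = (Finset.univ.filter fun u => (u, v) ∈ D.arcs).image (fun u => (u, v)) := by
      ext ⟨p, q⟩
      simp only [Finset.mem_filter, Finset.mem_image, Finset.mem_univ, true_and]
      constructor
      · rintro ⟨hm, rfl⟩; exact ⟨p, hm, rfl⟩
      · rintro ⟨u, hm, h⟩; rw [Prod.mk.injEq] at h; obtain ⟨rfl, rfl⟩ := h; exact ⟨hm, rfl⟩
    rw [himg, Finset.card_image_of_injective _ (fun x y h => by
      rw [Prod.mk.injEq] at h; exact h.1), Finset.card_filter]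
    push_cast
    rfl
  · have himg : (D.arcs.filter fun p => p.1 = v)
        = (Finset.univ.filter fun u => (v, u) ∈ D.arcs).image (fun u => (v, u)) := by
      ext ⟨p, q⟩
      simp only [Finset.mem_filter, Finset.mem_image, Finset.mem_univ, true_and]
      constructor
      · rintro ⟨hm, rfl⟩; exact ⟨q, hm, rfl⟩
      · rintro ⟨u, hm, h⟩; rw [Prod.mk.injEq] at h; obtain ⟨rfl, rfl⟩ := h; exact ⟨hm, rfl⟩
    rw [himg, Finset.card_image_of_injective _ (fun x y h => by
      rw [Prod.mk.injEq] at h; exact h.2), Finset.card_filter]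
    push_cast
    rfl

/-- build a digraph from a valid sign function -/
def ofX (x : Fin n → Fin n → ℤ) (hA : ∀ u v, x v u = - x u v) : Digraph' n where
  arcs := Finset.univ.filter fun p => x p.1 p.2 = 1
  oneWay := by
    intro u v h1 h2
    simp only [Finset.mem_filter] at h1 h2
    have := hA u v
    omega

lemma X_ofX (x : Fin n → Fin n → ℤ) (hA : ∀ u v, x v u = - x u v)
    (hR : ∀ u v, x u v = -1 ∨ x u v = 0 ∨ x u v = 1) :
    ∀ u v, X (ofX x hA) u v = x u v := by
  intro u v
  unfold X ofX
  simp only [Finset.mem_filter, Finset.mem_univ, true_and]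
  have := hA u v
  rcases hR u v with h | h | h <;> rw [h] <;> norm_num <;> omega


lemma no_loop (D : Digraph' n) (u : Fin n) : (u, u) ∉ D.arcs := fun h => D.oneWay u u h h

lemma step_of_deltaAdd {D D' : Digraph' n} (h : DeltaAdd D D') :
    ∃ a b c : Fin n, a ≠ b ∧ b ≠ c ∧ a ≠ c ∧
      ∀ u v, X D' u v = X D u v + tri a b c u v := by
  obtain ⟨u, v, w, huv, hvw, huw, nuv, nvw, nuw, harcs⟩ := h
  rw [not_adj_iff] at nuv nvw nuw
  have m1 : (u, v) ∉ D.arcs := by rw [mem_iff]; omega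
  have m2 : (v, u) ∉ D.arcs := by rw [mem_iff]; have := X_antisymm D u v; omega
  have m3 : (v, w) ∉ D.arcs := by rw [mem_iff]; omega
  have m4 : (w, v) ∉ D.arcs := by rw [mem_iff]; have := X_antisymm D v w; omega
  have m5 : (u, w) ∉ D.arcs := by rw [mem_iff]; omega
  have m6 : (w, u) ∉ D.arcs := by rw [mem_iff]; have := X_antisymm D u w; omega
  have ind : ∀ p : Fin n × Fin n, (if p ∈ D'.arcs then (1:ℤ) else 0) =
      (if p ∈ D.arcs then 1 else 0) + (if p = (u, v) then 1 else 0)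
        + (if p = (v, w) then 1 else 0) + (if p = (w, u) then 1 else 0) := by
    intro p
    rw [harcs]
    simp only [Finset.mem_union, Finset.mem_insert, Finset.mem_singleton]
    by_cases hp : p ∈ D.arcs
    · have n1 : p ≠ (u, v) := fun hh => m1 (hh ▸ hp)
      have n2 : p ≠ (v, w) := fun hh => m3 (hh ▸ hp)
      have n3 : p ≠ (w, u) := fun hh => m6 (hh ▸ hp)
      simp [hp, n1, n2, n3]
    · by_cases h1 : p = (u, v) <;> by_cases h2 : p = (v, w) <;> by_cases h3 : p = (w, u) <;>
        simp_all [Prod.mk.injEq]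
  refine ⟨u, v, w, huv, hvw, huw, fun p q => ?_⟩
  unfold X
  rw [ind (p, q), ind (q, p)]
  unfold tri e
  ring

lemma step_of_lambdaSub {D D' : Digraph' n} (h : LambdaSub D D') :
    ∃ a b c : Fin n, a ≠ b ∧ b ≠ c ∧ a ≠ c ∧
      ∀ u v, X D' u v = X D u v + tri a b c u v := by
  obtain ⟨u, v, w, hvu, hvw, hmem, nuv, nvw, harcs⟩ := h
  have huw : u ≠ w := by rintro rfl; exact no_loop D u hmem
  rw [not_adj_iff] at nuv nvw
  have m1 : (u, v) ∉ D.arcs := by rw [mem_iff]; omega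
  have m2 : (v, u) ∉ D.arcs := by rw [mem_iff]; have := X_antisymm D u v; omega
  have m3 : (v, w) ∉ D.arcs := by rw [mem_iff]; omega
  have m4 : (w, v) ∉ D.arcs := by rw [mem_iff]; have := X_antisymm D v w; omega
  have ind : ∀ p : Fin n × Fin n, (if p ∈ D'.arcs then (1:ℤ) else 0) =
      (if p ∈ D.arcs then 1 else 0) - (if p = (u, w) then 1 else 0)
        + (if p = (u, v) then 1 else 0) + (if p = (v, w) then 1 else 0) := by
    intro p
    rw [harcs]
    simp only [Finset.mem_union, Finset.mem_erase, Finset.mem_insert, Finset.mem_singleton]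
    by_cases hp : p ∈ D.arcs
    · have n1 : p ≠ (u, v) := fun hh => m1 (hh ▸ hp)
      have n2 : p ≠ (v, w) := fun hh => m3 (hh ▸ hp)
      by_cases h0 : p = (u, w)
      · subst h0
        have e1 : ¬(w = v) := fun hh => hvw hh.symm
        have e2 : ¬(u = v) := fun hh => hvu hh.symm
        simp [hmem, e1, e2]
      · simp [hp, n1, n2, h0]
    · have n0 : p ≠ (u, w) := fun hh => hp (hh ▸ hmem)
      by_cases h1 : p = (u, v) <;> by_cases h2 : p = (v, w) <;>
        simp_all [Prod.mk.injEq]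
  refine ⟨u, v, w, fun hh => hvu hh.symm, hvw, huw, fun p q => ?_⟩
  unfold X
  rw [ind (p, q), ind (q, p)]
  unfold tri
  rw [e_swap_args u w]
  unfold e
  ring

lemma step_of_move {D D' : Digraph' n} (h : DigraphMove D D') :
    ∃ a b c : Fin n, a ≠ b ∧ b ≠ c ∧ a ≠ c ∧
      ∀ u v, X D' u v = X D u v + tri a b c u v := by
  have flip : ∀ (E E' : Digraph' n),
      (∃ a b c : Fin n, a ≠ b ∧ b ≠ c ∧ a ≠ c ∧
        ∀ u v, X E u v = X E' u v + tri a b c u v) →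
      ∃ a b c : Fin n, a ≠ b ∧ b ≠ c ∧ a ≠ c ∧
        ∀ u v, X E' u v = X E u v + tri a b c u v := by
    rintro E E' ⟨a, b, c, hab, hbc, hac, hh⟩
    refine ⟨c, b, a, fun x => hbc x.symm, fun x => hab x.symm, fun x => hac x.symm,
      fun p q => ?_⟩
    rw [tri_rev]
    have := hh p q
    omega
  rcases h with h | h | h | h
  · exact step_of_deltaAdd h
  · exact flip _ _ (step_of_deltaAdd h)
  · exact step_of_lambdaSub h
  · exact flip _ _ (step_of_lambdaSub h)

lemma move_netDeg {D D' : Digraph' n} (h : DigraphMove D D') : D.netDeg = D'.netDeg := by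
  obtain ⟨a, b, c, _, _, _, hh⟩ := step_of_move h
  funext v
  rw [netDeg_eq, netDeg_eq]
  have : ∀ u, X D' u v = X D u v + tri a b c u v := fun u => hh u v
  rw [Finset.sum_congr rfl fun u _ => this u, Finset.sum_add_distrib, sum_tri]
  ring


lemma tri_rev' (a b c u v : Fin n) : tri a c b u v = - tri a b c u v := by
  unfold tri
  rw [e_swap_args c a, e_swap_args b c, e_swap_args a b]
  ring

lemma tri_rev'' (a b c u v : Fin n) : tri b a c u v = - tri a b c u v := by
  unfold tri
  rw [e_swap_args a b, e_swap_args c a, e_swap_args b c]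
  ring

lemma X_bounds (D : Digraph' n) (u v : Fin n) : -1 ≤ X D u v ∧ X D u v ≤ 1 := by
  rcases X_cases D u v with h | h | h <;> omega

lemma move_symm {D D' : Digraph' n} (h : DigraphMove D D') : DigraphMove D' D := by
  unfold DigraphMove at *
  tauto

lemma core0 (D D' : Digraph' n) (a b c : Fin n) (hab : a ≠ b) (hbc : b ≠ c) (hac : a ≠ c)
    (h : ∀ u v, X D' u v = X D u v + tri a b c u v)
    (hp : (X D a b = 0 ∧ X D b c = 0 ∧ X D c a = 0) ∨
          (X D a b = -1 ∧ X D b c = 0 ∧ X D c a = 0)) :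
    DigraphMove D D' := by
  have hanti_ab := X_antisymm D a b
  have hanti_bc := X_antisymm D b c
  have hanti_ca := X_antisymm D c a
  have t_ab := tri_ab hab hbc hac
  have t_bc := tri_bc hab hbc hac
  have t_ca := tri_ca hab hbc hac
  have t_ba := tri_ba hab hbc hac
  have t_cb := tri_cb hab hbc hac
  have t_ac := tri_ac hab hbc hac
  rcases hp with ⟨hp1, hp2, hp3⟩ | ⟨hp1, hp2, hp3⟩
  · -- Delta add
    refine Or.inl ⟨a, b, c, hab, hbc, hac, (not_adj_iff D a b).mpr hp1,
      (not_adj_iff D b c).mpr hp2, (not_adj_iff D a c).mpr (by omega), ?_⟩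
    ext ⟨p, q⟩
    rw [Finset.mem_union, Finset.mem_insert, Finset.mem_insert, Finset.mem_singleton,
      mem_iff, mem_iff, h p q]
    rcases eq_or_ne (p, q) (a, b) with hq | q1
    · rw [Prod.mk.injEq] at hq; obtain ⟨rfl, rfl⟩ := hq
      simp [t_ab, hp1]
    rcases eq_or_ne (p, q) (b, a) with hq | q2
    · rw [Prod.mk.injEq] at hq; obtain ⟨rfl, rfl⟩ := hq
      rw [t_ba]
      simp [Prod.mk.injEq, hab, hbc, hac, hab.symm, hbc.symm, hac.symm] <;> omega
    rcases eq_or_ne (p, q) (b, c) with hq | q3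
    · rw [Prod.mk.injEq] at hq; obtain ⟨rfl, rfl⟩ := hq
      simp [t_bc, hp2]
    rcases eq_or_ne (p, q) (c, b) with hq | q4
    · rw [Prod.mk.injEq] at hq; obtain ⟨rfl, rfl⟩ := hq
      rw [t_cb]
      simp [Prod.mk.injEq, hab, hbc, hac, hab.symm, hbc.symm, hac.symm] <;> omega
    rcases eq_or_ne (p, q) (c, a) with hq | q5
    · rw [Prod.mk.injEq] at hq; obtain ⟨rfl, rfl⟩ := hq
      simp [t_ca, hp3]
    rcases eq_or_ne (p, q) (a, c) with hq | q6
    · rw [Prod.mk.injEq] at hq; obtain ⟨rfl, rfl⟩ := hq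
      rw [t_ac]
      simp [Prod.mk.injEq, hab, hbc, hac, hab.symm, hbc.symm, hac.symm] <;> omega
    rw [tri_zero q1 q2 q3 q4 q5 q6]
    simp [q1, q3, q5]
  · -- Lambda : replace (b,a) by (b,c),(c,a)
    refine Or.inr (Or.inr (Or.inl ⟨b, c, a, hbc.symm, hac.symm,
      (mem_iff D b a).mpr (by omega), (not_adj_iff D b c).mpr hp2,
      (not_adj_iff D c a).mpr hp3, ?_⟩))
    ext ⟨p, q⟩
    rw [Finset.mem_union, Finset.mem_erase, Finset.mem_insert, Finset.mem_singleton,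
      mem_iff, mem_iff, h p q]
    rcases eq_or_ne (p, q) (a, b) with hq | q1
    · rw [Prod.mk.injEq] at hq; obtain ⟨rfl, rfl⟩ := hq
      rw [t_ab]
      simp [Prod.mk.injEq, hab, hbc, hac, hab.symm, hbc.symm, hac.symm] <;> omega
    rcases eq_or_ne (p, q) (b, a) with hq | q2
    · rw [Prod.mk.injEq] at hq; obtain ⟨rfl, rfl⟩ := hq
      rw [t_ba]
      simp [Prod.mk.injEq, hab, hbc, hac, hab.symm, hbc.symm, hac.symm] <;> omega
    rcases eq_or_ne (p, q) (b, c) with hq | q3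
    · rw [Prod.mk.injEq] at hq; obtain ⟨rfl, rfl⟩ := hq
      rw [t_bc]
      simp [Prod.mk.injEq, hab, hbc, hac, hab.symm, hbc.symm, hac.symm] <;> omega
    rcases eq_or_ne (p, q) (c, b) with hq | q4
    · rw [Prod.mk.injEq] at hq; obtain ⟨rfl, rfl⟩ := hq
      rw [t_cb]
      simp [Prod.mk.injEq, hab, hbc, hac, hab.symm, hbc.symm, hac.symm] <;> omega
    rcases eq_or_ne (p, q) (c, a) with hq | q5
    · rw [Prod.mk.injEq] at hq; obtain ⟨rfl, rfl⟩ := hq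
      rw [t_ca]
      simp [Prod.mk.injEq, hab, hbc, hac, hab.symm, hbc.symm, hac.symm] <;> omega
    rcases eq_or_ne (p, q) (a, c) with hq | q6
    · rw [Prod.mk.injEq] at hq; obtain ⟨rfl, rfl⟩ := hq
      rw [t_ac]
      simp [Prod.mk.injEq, hab, hbc, hac, hab.symm, hbc.symm, hac.symm] <;> omega
    rw [tri_zero q1 q2 q3 q4 q5 q6]
    simp [q2, q3, q5] <;> omega

lemma core (D D' : Digraph' n) (a b c : Fin n) (hab : a ≠ b) (hbc : b ≠ c) (hac : a ≠ c)
    (h : ∀ u v, X D' u v = X D u v + tri a b c u v) : DigraphMove D D' := by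
  have t_ab := tri_ab hab hbc hac
  have t_bc := tri_bc hab hbc hac
  have t_ca := tri_ca hab hbc hac
  have hD1 := X_bounds D a b
  have hD2 := X_bounds D b c
  have hD3 := X_bounds D c a
  have hD1' := X_bounds D' a b
  have hD2' := X_bounds D' b c
  have hD3' := X_bounds D' c a
  have e1 : X D' a b = X D a b + 1 := by have := h a b; rw [t_ab] at this; exact this
  have e2 : X D' b c = X D b c + 1 := by have := h b c; rw [t_bc] at this; exact this
  have e3 : X D' c a = X D c a + 1 := by have := h c a; rw [t_ca] at this; exact this
  have s1 : X D a b = -1 ∨ X D a b = 0 := by rcases X_cases D a b with hh | hh | hh <;> omega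
  have s2 : X D b c = -1 ∨ X D b c = 0 := by rcases X_cases D b c with hh | hh | hh <;> omega
  have s3 : X D c a = -1 ∨ X D c a = 0 := by rcases X_cases D c a with hh | hh | hh <;> omega
  have r1 : X D' c b = -(X D b c + 1) := by rw [← e2, X_antisymm]
  have r2 : X D' b a = -(X D a b + 1) := by rw [← e1, X_antisymm]
  have r3 : X D' a c = -(X D c a + 1) := by rw [← e3, X_antisymm]
  rcases s1 with hs1 | hs1 <;> rcases s2 with hs2 | hs2 <;> rcases s3 with hs3 | hs3
  · -- (-1,-1,-1) : reversed triple (c,b,a), Delta add on D'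
    refine move_symm (core0 D' D c b a hbc.symm hab.symm (fun x => hac x.symm)
      (fun u v => by rw [tri_rev]; have := h u v; omega) (Or.inl ⟨?_, ?_, ?_⟩)) <;> omega
  · -- (-1,-1,0) : triple (a,c,b) on D'
    refine move_symm (core0 D' D a c b hac (fun x => hbc x.symm) hab
      (fun u v => by rw [tri_rev']; have := h u v; omega) (Or.inr ⟨?_, ?_, ?_⟩)) <;> omega
  · -- (-1,0,-1) : triple (c,b,a) on D'
    refine move_symm (core0 D' D c b a hbc.symm hab.symm (fun x => hac x.symm)
      (fun u v => by rw [tri_rev]; have := h u v; omega) (Or.inr ⟨?_, ?_, ?_⟩)) <;> omega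
  · -- (-1,0,0) : Lambda on D
    exact core0 D D' a b c hab hbc hac h (Or.inr ⟨hs1, hs2, hs3⟩)
  · -- (0,-1,-1) : triple (b,a,c) on D'
    refine move_symm (core0 D' D b a c hab.symm hac hbc
      (fun u v => by rw [tri_rev'']; have := h u v; omega) (Or.inr ⟨?_, ?_, ?_⟩)) <;> omega
  · -- (0,-1,0) : triple (b,c,a) on D
    refine core0 D D' b c a hbc (fun x => hac x.symm) hab.symm
      (fun u v => by rw [tri_rot]; exact h u v) (Or.inr ⟨hs2, hs3, hs1⟩)
  · -- (0,0,-1) : triple (c,a,b) on D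
    refine core0 D D' c a b (fun x => hac x.symm) hab hbc.symm
      (fun u v => by rw [← tri_rot c a b]; exact h u v) (Or.inr ⟨hs3, hs1, hs2⟩)
  · -- (0,0,0) : Delta add on D
    exact core0 D D' a b c hab hbc hac h (Or.inl ⟨hs1, hs2, hs3⟩)


lemma X_self (D : Digraph' n) (u : Fin n) : X D u u = 0 := by unfold X; ring

lemma range_step (D : Digraph' n) {a b c : Fin n} (hab : a ≠ b) (hbc : b ≠ c) (hac : a ≠ c)
    (h1 : X D a b ≤ 0) (h2 : X D b c ≤ 0) (h3 : X D c a ≤ 0) :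
    ∀ u v, X D u v + tri a b c u v = -1 ∨ X D u v + tri a b c u v = 0 ∨
      X D u v + tri a b c u v = 1 := by
  intro u v
  have hb := X_bounds D u v
  rcases eq_or_ne (u, v) (a, b) with hq | q1
  · rw [Prod.mk.injEq] at hq; obtain ⟨rfl, rfl⟩ := hq
    rw [tri_ab hab hbc hac]; have := X_bounds D u v; omega
  rcases eq_or_ne (u, v) (b, a) with hq | q2
  · rw [Prod.mk.injEq] at hq; obtain ⟨rfl, rfl⟩ := hq
    rw [tri_ba hab hbc hac]; have := X_antisymm D u v; omega
  rcases eq_or_ne (u, v) (b, c) with hq | q3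
  · rw [Prod.mk.injEq] at hq; obtain ⟨rfl, rfl⟩ := hq
    rw [tri_bc hab hbc hac]; omega
  rcases eq_or_ne (u, v) (c, b) with hq | q4
  · rw [Prod.mk.injEq] at hq; obtain ⟨rfl, rfl⟩ := hq
    rw [tri_cb hab hbc hac]; have := X_antisymm D u v; omega
  rcases eq_or_ne (u, v) (c, a) with hq | q5
  · rw [Prod.mk.injEq] at hq; obtain ⟨rfl, rfl⟩ := hq
    rw [tri_ca hab hbc hac]; omega
  rcases eq_or_ne (u, v) (a, c) with hq | q6
  · rw [Prod.mk.injEq] at hq; obtain ⟨rfl, rfl⟩ := hq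
    rw [tri_ac hab hbc hac]; have := X_antisymm D u v; omega
  rw [tri_zero q1 q2 q3 q4 q5 q6]
  omega

lemma exists_move (D : Digraph' n) {a b c : Fin n} (hab : a ≠ b) (hbc : b ≠ c) (hac : a ≠ c)
    (h1 : X D a b ≤ 0) (h2 : X D b c ≤ 0) (h3 : X D c a ≤ 0) :
    ∃ D'' : Digraph' n, DigraphMove D D'' ∧
      ∀ u v, X D'' u v = X D u v + tri a b c u v := by
  have hA : ∀ u v : Fin n, X D v u + tri a b c v u = -(X D u v + tri a b c u v) := by
    intro u v; rw [X_antisymm, tri_swap_uv]; ring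
  have hR := range_step D hab hbc hac h1 h2 h3
  have hX := X_ofX (fun u v => X D u v + tri a b c u v) hA hR
  exact ⟨ofX _ hA, core D _ a b c hab hbc hac hX, hX⟩

/-! ### distance -/

def dist (x x' : Fin n → Fin n → ℤ) : ℕ :=
  ∑ p : Fin n × Fin n, (x p.1 p.2 - x' p.1 p.2).natAbs

lemma dist_symm (x x' : Fin n → Fin n → ℤ) : dist x x' = dist x' x := by
  unfold dist
  exact Finset.sum_congr rfl fun p _ => by omega

lemma eq_of_dist_zero {D D' : Digraph' n} (h : dist (X D) (X D') = 0) : D = D' := by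
  apply digraph_ext
  intro u v
  have := (Finset.sum_eq_zero_iff.mp h) (u, v) (Finset.mem_univ _)
  simp only [] at this
  omega

lemma dist_lt (x x' x'' : Fin n → Fin n → ℤ) {a b c : Fin n}
    (hab : a ≠ b) (hbc : b ≠ c) (hac : a ≠ c)
    (hx'' : ∀ u v, x'' u v = x u v + tri a b c u v)
    (h1 : x a b < x' a b) (h2 : x b c < x' b c)
    (hx : ∀ u v, x v u = -x u v) (hx' : ∀ u v, x' v u = -x' u v) :
    dist x'' x' < dist x x' := by
  classical
  set S : Finset (Fin n × Fin n) := {(a,b),(b,a),(b,c),(c,b),(c,a),(a,c)} with hSdef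
  unfold dist
  rw [← Finset.sum_add_sum_compl S, ← Finset.sum_add_sum_compl S
    (fun p => (x p.1 p.2 - x' p.1 p.2).natAbs)]
  have hcompl : ∀ p ∈ Sᶜ, ((x'' p.1 p.2 - x' p.1 p.2).natAbs : ℕ)
      = (x p.1 p.2 - x' p.1 p.2).natAbs := by
    intro p hp
    rw [Finset.mem_compl, hSdef] at hp
    simp only [Finset.mem_insert, Finset.mem_singleton, not_or] at hp
    obtain ⟨q1, q2, q3, q4, q5, q6⟩ := hp
    have hz : tri a b c p.1 p.2 = 0 :=
      tri_zero (by simpa using q1) (by simpa using q2) (by simpa using q3)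
        (by simpa using q4) (by simpa using q5) (by simpa using q6)
    rw [hx'', hz, add_zero]
  rw [Finset.sum_congr rfl hcompl]
  have expand : ∀ f : Fin n × Fin n → ℕ, ∑ p ∈ S, f p
      = f (a,b) + f (b,a) + f (b,c) + f (c,b) + f (c,a) + f (a,c) := by
    intro f
    rw [hSdef]
    rw [Finset.sum_insert (by
        simp [Prod.mk.injEq, hab, hbc, hac, hab.symm, hbc.symm, hac.symm]),
      Finset.sum_insert (by
        simp [Prod.mk.injEq, hab, hbc, hac, hab.symm, hbc.symm, hac.symm]),
      Finset.sum_insert (by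
        simp [Prod.mk.injEq, hab, hbc, hac, hab.symm, hbc.symm, hac.symm]),
      Finset.sum_insert (by
        simp [Prod.mk.injEq, hab, hbc, hac, hab.symm, hbc.symm, hac.symm]),
      Finset.sum_insert (by
        simp [Prod.mk.injEq, hab, hbc, hac, hab.symm, hbc.symm, hac.symm]),
      Finset.sum_singleton]
    ring
  have hlt : (∑ p ∈ S, ((x'' p.1 p.2 - x' p.1 p.2).natAbs : ℕ))
      < ∑ p ∈ S, (x p.1 p.2 - x' p.1 p.2).natAbs := by
    rw [expand, expand]
    simp only []
    rw [hx'' a b, hx'' b a, hx'' b c, hx'' c b, hx'' c a, hx'' a c,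
      tri_ab hab hbc hac, tri_ba hab hbc hac, tri_bc hab hbc hac,
      tri_cb hab hbc hac, tri_ca hab hbc hac, tri_ac hab hbc hac]
    have a1 := hx a b; have a2 := hx b c; have a3 := hx c a
    have b1 := hx' a b; have b2 := hx' b c; have b3 := hx' c a
    omega
  omega


lemma cycle_step (D₁ D₂ : Digraph' n) :
    ∀ k : ℕ, 2 ≤ k → ∀ w : ℕ → Fin n, w k = w 0 →
      (∀ t, t < k → 1 ≤ X D₂ (w t) (w (t+1)) - X D₁ (w t) (w (t+1))) →
      ∃ D'' : Digraph' n,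
        (DigraphMove D₁ D'' ∧ dist (X D'') (X D₂) < dist (X D₁) (X D₂)) ∨
        (DigraphMove D₂ D'' ∧ dist (X D₁) (X D'') < dist (X D₁) (X D₂)) := by
  intro k
  induction k using Nat.strong_induction_on with
  | _ k ih =>
  intro hk w hw hpos
  rcases Nat.lt_or_ge k 3 with h3 | h3
  · -- k = 2 : impossible
    have hk2 : k = 2 := by omega
    subst hk2
    have e0 := hpos 0 (by omega)
    have e1 := hpos 1 (by omega)
    norm_num at e0 e1
    rw [hw] at e1
    have q1 := X_antisymm D₁ (w 0) (w 1)
    have q2 := X_antisymm D₂ (w 0) (w 1)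
    omega
  · have e0 := hpos 0 (by omega)
    have e1 := hpos 1 (by omega)
    norm_num at e0 e1
    have hab : w 0 ≠ w 1 := by
      intro hh
      rw [← hh] at e0
      rw [X_self, X_self] at e0
      omega
    have hbc : w 1 ≠ w 2 := by
      intro hh
      rw [← hh] at e1
      rw [X_self, X_self] at e1
      omega
    by_cases hacq : w 0 = w 2
    · rcases Nat.lt_or_ge k 4 with h4 | h4
      · -- k = 3 : impossible
        have hk3 : k = 3 := by omega
        subst hk3
        have e2 := hpos 2 (by omega)
        norm_num at e2
        rw [hw, ← hacq] at e2
        rw [X_self, X_self] at e2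
        omega
      · refine ih (k - 2) (by omega) (by omega) (fun t => w (t + 2)) ?_ ?_
        · have hkk : k - 2 + 2 = k := by omega
          show w (k - 2 + 2) = w (0 + 2)
          rw [hkk, hw]
          norm_num
          exact hacq
        · intro t ht
          exact hpos (t + 2) (by omega)
    · by_cases hych : 1 ≤ X D₂ (w 0) (w 2) - X D₁ (w 0) (w 2)
      · -- shortcut
        refine ih (k - 1) (by omega) (by omega)
          (fun t => if t = 0 then w 0 else w (t + 1)) ?_ ?_
        · have hne : k - 1 ≠ 0 := by omega
          have hkk : k - 1 + 1 = k := by omega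
          show (if k - 1 = 0 then w 0 else w (k - 1 + 1)) = if (0:ℕ) = 0 then w 0 else w (0 + 1)
          rw [if_neg hne, if_pos rfl, hkk, hw]
        · intro t ht
          rcases Nat.eq_zero_or_pos t with rfl | htpos
          · simpa using hych
          · have ht0 : t ≠ 0 := by omega
            have ht1 : t + 1 ≠ 0 := by omega
            show 1 ≤ X D₂ (if t = 0 then w 0 else w (t + 1))
                  (if t + 1 = 0 then w 0 else w (t + 1 + 1))
                - X D₁ (if t = 0 then w 0 else w (t + 1))
                  (if t + 1 = 0 then w 0 else w (t + 1 + 1))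
            rw [if_neg ht0, if_neg ht1]
            exact hpos (t + 1) (by omega)
      · -- perform a move on the triangle (w 0, w 1, w 2)
        push_neg at hych
        have b1 := X_bounds D₁ (w 0) (w 1)
        have b2 := X_bounds D₂ (w 0) (w 1)
        have b3 := X_bounds D₁ (w 1) (w 2)
        have b4 := X_bounds D₂ (w 1) (w 2)
        have b5 := X_bounds D₁ (w 0) (w 2)
        have b6 := X_bounds D₂ (w 0) (w 2)
        by_cases hfeas : 0 ≤ X D₁ (w 0) (w 2)
        · have h1' : X D₁ (w 0) (w 1) ≤ 0 := by omega
          have h2' : X D₁ (w 1) (w 2) ≤ 0 := by omega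
          have h3' : X D₁ (w 2) (w 0) ≤ 0 := by
            have := X_antisymm D₁ (w 0) (w 2); omega
          obtain ⟨D'', hmv, hX⟩ := exists_move D₁ hab hbc hacq h1' h2' h3'
          refine ⟨D'', Or.inl ⟨hmv, ?_⟩⟩
          exact dist_lt (X D₁) (X D₂) (X D'') hab hbc hacq hX (by omega) (by omega)
            (X_antisymm D₁) (X_antisymm D₂)
        · -- move on D₂ with reversed triple
          have h1' : X D₂ (w 2) (w 1) ≤ 0 := by
            have := X_antisymm D₂ (w 1) (w 2); omega
          have h2' : X D₂ (w 1) (w 0) ≤ 0 := by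
            have := X_antisymm D₂ (w 0) (w 1); omega
          have h3' : X D₂ (w 0) (w 2) ≤ 0 := by omega
          obtain ⟨D'', hmv, hX⟩ := exists_move D₂ hbc.symm hab.symm
            (fun hh => hacq hh.symm) h1' h2' h3'
          refine ⟨D'', Or.inr ⟨hmv, ?_⟩⟩
          rw [dist_symm (X D₁) (X D''), dist_symm (X D₁) (X D₂)]
          refine dist_lt (X D₂) (X D₁) (X D'') hbc.symm hab.symm
            (fun hh => hacq hh.symm) hX ?_ ?_ (X_antisymm D₂) (X_antisymm D₁)
          · have := X_antisymm D₂ (w 1) (w 2); have := X_antisymm D₁ (w 1) (w 2); omega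
          · have := X_antisymm D₂ (w 0) (w 1); have := X_antisymm D₁ (w 0) (w 1); omega

lemma reach (N : ℕ) : ∀ D₁ D₂ : Digraph' n, dist (X D₁) (X D₂) ≤ N →
    D₁.netDeg = D₂.netDeg → Relation.ReflTransGen DigraphMove D₁ D₂ := by
  induction N with
  | zero =>
    intro D₁ D₂ hd _
    rw [eq_of_dist_zero (Nat.le_zero.mp hd)]
  | succ N ihN =>
    intro D₁ D₂ hd hdeg
    by_cases h0 : dist (X D₁) (X D₂) = 0
    · rw [eq_of_dist_zero h0]
    · -- set up the difference flow
      classical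
      set y : Fin n → Fin n → ℤ := fun u v => X D₂ u v - X D₁ u v with hy
      have hyanti : ∀ u v, y v u = - y u v := by
        intro u v
        simp only [hy]
        have h1 := X_antisymm D₂ u v
        have h2 := X_antisymm D₁ u v
        omega
      have hcol : ∀ v, ∑ u : Fin n, y u v = 0 := by
        intro v
        simp only [hy]
        rw [Finset.sum_sub_distrib, ← netDeg_eq, ← netDeg_eq, hdeg]
        ring
      have hrow : ∀ v, ∑ u : Fin n, y v u = 0 := by
        intro v
        have : ∑ u : Fin n, y v u = ∑ u : Fin n, -(y u v) :=
          Finset.sum_congr rfl fun u _ => by rw [hyanti]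
        rw [this, Finset.sum_neg_distrib, hcol]
        ring
      -- find a starting positive arc
      have hstart : ∃ a b : Fin n, 1 ≤ y a b := by
        by_contra hcon
        push_neg at hcon
        apply h0
        unfold dist
        apply Finset.sum_eq_zero
        intro p _
        have c1 := hcon p.1 p.2
        have c2 := hcon p.2 p.1
        have := hyanti p.1 p.2
        simp only [hy] at c1 c2 this
        omega
      obtain ⟨a₀, b₀, hstart⟩ := hstart
      -- every vertex with positive in-flow has positive out-flow
      have step : ∀ b : Fin n, (∃ a, 1 ≤ y a b) → ∃ c, 1 ≤ y b c := by
        rintro b ⟨a, ha⟩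
        by_contra hcon
        push_neg at hcon
        have hle : ∑ c : Fin n, y b c ≤ ∑ c : Fin n, (if c = a then (-1 : ℤ) else 0) := by
          apply Finset.sum_le_sum
          intro c _
          by_cases hc : c = a
          · rw [if_pos hc, hc]
            have := hyanti a b
            omega
          · rw [if_neg hc]
            have := hcon c
            omega
        rw [hrow, Finset.sum_ite_eq' Finset.univ a (fun _ => (-1:ℤ))] at hle
        simp at hle
      -- build an infinite positive walk
      let T := {b : Fin n // ∃ a, 1 ≤ y a b}
      let f : T → T := fun s => ⟨(step s.1 s.2).choose, ⟨s.1, (step s.1 s.2).choose_spec⟩⟩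
      let v : ℕ → T := fun i => f^[i] ⟨b₀, a₀, hstart⟩
      have hedge : ∀ i : ℕ, 1 ≤ y (v i).1 (v (i+1)).1 := by
        intro i
        have hit : v (i+1) = f (v i) := Function.iterate_succ_apply' f i _
        rw [hit]
        exact (step (v i).1 (v i).2).choose_spec
      -- pigeonhole: the walk revisits a vertex
      obtain ⟨i, j, hij, hveq⟩ :=
        Fintype.exists_ne_map_eq_of_card_lt (fun i : Fin (n+1) => (v i.1).1)
          (by simp)
      -- wlog i < j
      obtain ⟨i, j, hlt, hveq⟩ : ∃ i j : Fin (n+1), i.1 < j.1 ∧ (v i.1).1 = (v j.1).1 := by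
        rcases Ne.lt_or_gt hij with hlt | hlt
        · exact ⟨i, j, hlt, hveq⟩
        · exact ⟨j, i, hlt, hveq.symm⟩
      set k := j.1 - i.1 with hkdef
      have hk1 : 1 ≤ k := by omega
      have hk2 : 2 ≤ k := by
        by_contra hcon
        have hk : k = 1 := by omega
        have : j.1 = i.1 + 1 := by omega
        rw [this] at hveq
        have := hedge i.1
        rw [← hveq] at this
        have hz : y (v i.1).1 (v i.1).1 = 0 := by
          simp only [hy]
          rw [X_self, X_self]
          omega
        omega
      have hcyc := cycle_step D₁ D₂ k hk2 (fun t => (v (i.1 + t)).1) ?_ ?_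
      · obtain ⟨D'', hcase⟩ := hcyc
        rcases hcase with ⟨hmv, hdist⟩ | ⟨hmv, hdist⟩
        · exact Relation.ReflTransGen.head hmv
            (ihN D'' D₂ (by omega) (by rw [← move_netDeg hmv]; exact hdeg))
        · exact Relation.ReflTransGen.tail
            (ihN D₁ D'' (by omega) (by rw [hdeg, move_netDeg hmv]))
            (move_symm hmv)
      · have : i.1 + k = j.1 := by omega
        show (v (i.1 + k)).1 = (v i.1).1
        rw [this]
        exact hveq.symm
      · intro t ht
        have := hedge (i.1 + t)
        simp only [hy] at this
        have harr : i.1 + t + 1 = i.1 + (t + 1) := by omega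
        rw [harr] at this
        exact this

end NetDegAux

/-- Two simple digraphs have the same net-degree sequence iff one can be transformed
into the other by a finite sequence of Δ- and Λ-operations. -/
theorem netDeg_eq_iff_reachable_by_moves (n : ℕ) (D₁ D₂ : Digraph' n) :
    D₁.netDeg = D₂.netDeg ↔ Relation.ReflTransGen DigraphMove D₁ D₂ := by
  constructor
  · intro h
    exact NetDegAux.reach (NetDegAux.dist (NetDegAux.X D₁) (NetDegAux.X D₂)) D₁ D₂ le_rfl h
  · intro h
    induction h with
    | refl => rfl
    | tail _ hmv ih => exact ih.trans (NetDegAux.move_netDeg hmv)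
end

section
/- Let U(n) denote the number of uniquely realizable net-degree sequences of simple digraphs on vertex set [n]. Then U(0) = U(1) = 1 and U(n) = n · U(n−1) + C(n,2) · U(n−2) for all n ≥ 2. -/
/-- `U n` is the number of uniquely realizable net-degree sequences of simple digraphs
on the vertex set `Fin n`: sequences realized by exactly one digraph. -/
noncomputable def U (n : ℕ) : ℕ :=
  {d : Fin n → ℤ | ∃! D : Digraph' n, D.netDeg = d}.ncard

namespace UR
open Finset

variable {n : ℕ}

lemma Digraph'.ext' {D E : Digraph' n} (h : D.arcs = E.arcs) : D = E := by
  cases D; cases E; simpa using h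

lemma card_snd (A : Finset (Fin n × Fin n)) (v : Fin n) :
    (A.filter fun p => p.2 = v).card = (univ.filter fun u => (u, v) ∈ A).card := by
  apply card_bij (fun p _ => p.1)
  · intro a ha
    simp only [mem_filter, mem_univ, true_and] at ha ⊢
    have h : a = (a.1, v) := Prod.ext rfl ha.2
    rw [← h]; exact ha.1
  · intro a ha b hb hab
    simp only [mem_filter] at ha hb
    exact Prod.ext hab (ha.2.trans hb.2.symm)
  · intro b hb
    simp only [mem_filter, mem_univ, true_and] at hb
    exact ⟨(b, v), by simp [mem_filter, hb], rfl⟩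

lemma card_fst (A : Finset (Fin n × Fin n)) (v : Fin n) :
    (A.filter fun p => p.1 = v).card = (univ.filter fun u => (v, u) ∈ A).card := by
  apply card_bij (fun p _ => p.2)
  · intro a ha
    simp only [mem_filter, mem_univ, true_and] at ha ⊢
    have h : a = (v, a.2) := Prod.ext ha.2 rfl
    rw [← h]; exact ha.1
  · intro a ha b hb hab
    simp only [mem_filter] at ha hb
    exact Prod.ext (ha.2.trans hb.2.symm) hab
  · intro b hb
    simp only [mem_filter, mem_univ, true_and] at hb
    exact ⟨(v, b), by simp [mem_filter, hb], rfl⟩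

lemma netDeg_eq (D : Digraph' n) (v : Fin n) :
    D.netDeg v = ((univ.filter fun u => (u, v) ∈ D.arcs).card : ℤ)
      - ((univ.filter fun u => (v, u) ∈ D.arcs).card : ℤ) := by
  rw [Digraph'.netDeg, card_snd, card_fst]

/-- indicator of an arc -/
def χ (D : Digraph' n) (u v : Fin n) : ℤ := if (u, v) ∈ D.arcs then 1 else 0

lemma netDeg_eq_sum (D : Digraph' n) (v : Fin n) :
    D.netDeg v = ∑ u, (χ D u v - χ D v u) := by
  rw [netDeg_eq, Finset.sum_sub_distrib]
  unfold χ
  rw [Finset.sum_boole, Finset.sum_boole]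

lemma no_loop (D : Digraph' n) {u : Fin n} (h : (u, u) ∈ D.arcs) : False :=
  D.oneWay u u h h

lemma weight_id (D : Digraph' n) (g : Fin n → ℤ) :
    ∑ v, g v * D.netDeg v = ∑ p ∈ D.arcs, (g p.2 - g p.1) := by
  have key : ∀ h : Fin n × Fin n → Fin n,
      ∑ v, g v * ((D.arcs.filter fun p => h p = v).card : ℤ) = ∑ p ∈ D.arcs, g (h p) := by
    intro h
    rw [← Finset.sum_fiberwise D.arcs h (fun p => g (h p))]
    refine Finset.sum_congr rfl fun v _ => ?_
    have h2 : ∀ p ∈ D.arcs.filter fun p => h p = v, g (h p) = g v := by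
      intro p hp; rw [(mem_filter.1 hp).2]
    rw [Finset.sum_congr rfl h2, Finset.sum_const, nsmul_eq_mul, mul_comm]
  have : ∀ v, g v * D.netDeg v
      = g v * ((D.arcs.filter fun p => p.2 = v).card : ℤ)
        - g v * ((D.arcs.filter fun p => p.1 = v).card : ℤ) := by
    intro v; rw [Digraph'.netDeg]; ring
  rw [Finset.sum_congr rfl fun v _ => this v, Finset.sum_sub_distrib,
    key (fun p => p.2), key (fun p => p.1), ← Finset.sum_sub_distrib]

/-- number of vertices strictly below `v` -/
def Lo (d : Fin n → ℤ) (v : Fin n) : ℕ := (univ.filter fun u => d u < d v).card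
/-- number of vertices strictly above `v` -/
def Hi (d : Fin n → ℤ) (v : Fin n) : ℕ := (univ.filter fun u => d v < d u).card
/-- number of vertices at the same level as `v` (including `v`) -/
def Eqc (d : Fin n → ℤ) (v : Fin n) : ℕ := (univ.filter fun u => d u = d v).card

/-- characterization predicate for uniquely realizable sequences -/
def Good (d : Fin n → ℤ) : Prop :=
  (∀ v, d v = (Lo d v : ℤ) - (Hi d v : ℤ)) ∧ (∀ v, Eqc d v ≤ 2)

lemma lo_hi_eqc (d : Fin n → ℤ) (v : Fin n) : Lo d v + Hi d v + Eqc d v = n := by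
  unfold Lo Hi Eqc
  rw [Finset.card_filter, Finset.card_filter, Finset.card_filter, ← Finset.sum_add_distrib,
    ← Finset.sum_add_distrib]
  have : ∀ u : Fin n,
      ((if d u < d v then 1 else 0) + (if d v < d u then 1 else 0)) + (if d u = d v then 1 else 0)
        = 1 := by
    intro u; split_ifs <;> omega
  rw [Finset.sum_congr rfl fun u _ => this u]
  simp

lemma one_le_eqc (d : Fin n → ℤ) (v : Fin n) : 1 ≤ Eqc d v := by
  have : v ∈ univ.filter fun u => d u = d v := by simp
  exact Finset.card_pos.2 ⟨v, this⟩ 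

/-- the canonical digraph of a sequence -/
def canon (d : Fin n → ℤ) : Digraph' n :=
  ⟨univ.filter fun p => d p.1 < d p.2, by
    intro u v h1 h2
    simp only [mem_filter] at h1 h2
    omega⟩

lemma mem_canon (d : Fin n → ℤ) (p : Fin n × Fin n) : p ∈ (canon d).arcs ↔ d p.1 < d p.2 := by
  simp [canon]

lemma canon_netDeg {d : Fin n → ℤ} (hE : ∀ v, d v = (Lo d v : ℤ) - (Hi d v : ℤ)) :
    (canon d).netDeg = d := by
  funext v
  rw [netDeg_eq]
  have h1 : (univ.filter fun u => (u, v) ∈ (canon d).arcs) = univ.filter fun u => d u < d v := by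
    ext u; simp [mem_canon]
  have h2 : (univ.filter fun u => (v, u) ∈ (canon d).arcs) = univ.filter fun u => d v < d u := by
    ext u; simp [mem_canon]
  rw [h1, h2, ← Lo, ← Hi, ← hE]


lemma eqc_lt {d : Fin n → ℤ} {u v z : Fin n} (hC : ∀ w, Eqc d w ≤ 2)
    (huv : u ≠ v) (huz : u ≠ z) (hvz : v ≠ z) (h1 : d u = d v) (h2 : d u = d z) : False := by
  have h3 : 2 < Eqc d u := by
    apply Finset.two_lt_card.2
    exact ⟨u, by simp, v, by simp [← h1], z, by simp [← h2], huv, huz, hvz⟩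
  exact absurd (hC u) (by omega)

theorem soundness {d : Fin n → ℤ} (hE : ∀ v, d v = (Lo d v : ℤ) - (Hi d v : ℤ))
    (hC : ∀ v, Eqc d v ≤ 2) : ∀ D : Digraph' n, D.netDeg = d → D = canon d := by
  intro D hD
  set f : Fin n × Fin n → ℤ := fun p => d p.2 - d p.1 with hf
  have h1 : ∑ p ∈ D.arcs, f p = ∑ v, d v * d v := by
    rw [← weight_id D d, hD]
  have h2 : ∑ p ∈ (canon d).arcs, f p = ∑ v, d v * d v := by
    rw [← weight_id (canon d) d, canon_netDeg hE]
  set T : Finset (Fin n × Fin n) := D.arcs.filter (fun p => d p.1 < d p.2) with hT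
  have hTD : T ⊆ D.arcs := Finset.filter_subset _ _
  have hTP : T ⊆ (canon d).arcs := by
    intro p hp; rw [mem_canon]; exact (mem_filter.1 hp).2
  have hsplit : ∑ p ∈ T, f p + ∑ p ∈ D.arcs.filter (fun p => ¬ d p.1 < d p.2), f p
      = ∑ p ∈ D.arcs, f p := Finset.sum_filter_add_sum_filter_not _ _ _
  have hrest : ∑ p ∈ D.arcs.filter (fun p => ¬ d p.1 < d p.2), f p ≤ 0 := by
    apply Finset.sum_nonpos
    intro p hp
    have := (mem_filter.1 hp).2
    simp only [hf]; omega
  have hTle : ∑ p ∈ T, f p ≤ ∑ p ∈ (canon d).arcs, f p := by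
    apply Finset.sum_le_sum_of_subset_of_nonneg hTP
    intro p hp _
    have := (mem_canon d p).1 hp
    simp only [hf]; omega
  have hPT : ∑ p ∈ (canon d).arcs \ T, f p = 0 := by
    have := Finset.sum_sdiff hTP (f := f)
    omega
  have hPsub : (canon d).arcs ⊆ T := by
    by_contra hcon
    obtain ⟨p, hp1, hp2⟩ := Finset.not_subset.1 hcon
    have hpos : 0 < ∑ p ∈ (canon d).arcs \ T, f p := by
      apply Finset.sum_pos
      · intro q hq
        have := (mem_canon d q).1 (Finset.mem_sdiff.1 hq).1
        simp only [hf]; omega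
      · exact ⟨p, Finset.mem_sdiff.2 ⟨hp1, hp2⟩⟩
    omega
  have hPD : (canon d).arcs ⊆ D.arcs := hPsub.trans hTD
  -- now the converse inclusion
  apply Digraph'.ext'
  apply Finset.Subset.antisymm _ hPD
  intro p hp
  obtain ⟨u, v⟩ := p
  have hne : u ≠ v := by rintro rfl; exact no_loop D hp
  rcases lt_trichotomy (d u) (d v) with hlt | heq | hgt
  · exact (mem_canon d (u, v)).2 hlt
  · exfalso
    -- equal-level arc: contradiction via net-degree at u
    have hin : (univ.filter fun z => (z, u) ∈ D.arcs) = univ.filter fun z => d z < d u := by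
      ext z
      simp only [mem_filter, mem_univ, true_and]
      constructor
      · intro hz
        have hzu : z ≠ u := by rintro rfl; exact no_loop D hz
        rcases lt_trichotomy (d z) (d u) with h | h | h
        · exact h
        · exfalso
          rcases eq_or_ne z v with rfl | hzv
          · exact D.oneWay u z hp hz
          · exact eqc_lt hC hne hzu.symm (Ne.symm hzv) heq h.symm
        · exact absurd (hPD ((mem_canon d (u, z)).2 h)) (D.oneWay z u hz)
      · intro hz
        exact hPD ((mem_canon d (z, u)).2 hz)
    have hout : (univ.filter fun z => (u, z) ∈ D.arcs)
        = insert v (univ.filter fun z => d u < d z) := by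
      ext z
      simp only [mem_filter, mem_univ, true_and, Finset.mem_insert]
      constructor
      · intro hz
        have hzu : z ≠ u := by rintro rfl; exact no_loop D hz
        rcases lt_trichotomy (d u) (d z) with h | h | h
        · exact Or.inr h
        · rcases eq_or_ne z v with rfl | hzv
          · exact Or.inl rfl
          · exact absurd (eqc_lt hC hne hzu.symm (Ne.symm hzv) heq h) id
        · exact absurd (hPD ((mem_canon d (z, u)).2 h)) fun hh => D.oneWay u z hz hh
      · rintro (rfl | hz)
        · exact hp
        · exact hPD ((mem_canon d (u, z)).2 hz)
    have hvnot : v ∉ univ.filter fun z => d u < d z := by simp [heq]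
    have hcard : (univ.filter fun z => (u, z) ∈ D.arcs).card = Hi d u + 1 := by
      rw [hout, Finset.card_insert_of_notMem hvnot, Hi]
    have hnd : D.netDeg u = d u := by rw [hD]
    rw [netDeg_eq, hin, hcard] at hnd
    have := hE u
    rw [← Lo] at hnd
    omega
  · exfalso
    exact D.oneWay v u (hPD ((mem_canon d (v, u)).2 hgt)) hp


lemma relabel (sg : Equiv.Perm (Fin n)) (D : Digraph' n) :
    ∃ Ds : Digraph' n, (∀ p : Fin n × Fin n, p ∈ Ds.arcs ↔ (sg p.1, sg p.2) ∈ D.arcs)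
      ∧ ∀ w, Ds.netDeg w = D.netDeg (sg w) := by
  refine ⟨⟨univ.filter fun p => (sg p.1, sg p.2) ∈ D.arcs, ?_⟩, fun p => by simp, ?_⟩
  · intro u v h1 h2
    simp only [mem_filter, mem_univ, true_and] at h1 h2
    exact D.oneWay _ _ h1 h2
  · intro w
    rw [netDeg_eq, netDeg_eq]
    have e1 : (univ.filter fun u => (u, w) ∈
        (univ.filter fun p : Fin n × Fin n => (sg p.1, sg p.2) ∈ D.arcs)).card
        = (univ.filter fun u => (u, sg w) ∈ D.arcs).card := by
      apply Finset.card_equiv sg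
      intro u; simp
    have e2 : (univ.filter fun u => (w, u) ∈
        (univ.filter fun p : Fin n × Fin n => (sg p.1, sg p.2) ∈ D.arcs)).card
        = (univ.filter fun u => (sg w, u) ∈ D.arcs).card := by
      apply Finset.card_equiv sg
      intro u; simp
    simp only [e1, e2]

/-- pushing one unit of flow around the triangle x → y → z → x -/
def pushA (D : Digraph' n) (x y z : Fin n) : Finset (Fin n × Fin n) :=
  (D.arcs \ {(y,x),(z,y),(x,z)}) ∪
    (({(x,y),(y,z),(z,x)} : Finset (Fin n × Fin n)).filter fun p => (p.2, p.1) ∉ D.arcs)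

lemma mem_pushA (D : Digraph' n) (x y z : Fin n) (a b : Fin n) :
    (a, b) ∈ pushA D x y z ↔
      ((a, b) ∈ D.arcs ∧ ¬(a = y ∧ b = x) ∧ ¬(a = z ∧ b = y) ∧ ¬(a = x ∧ b = z))
      ∨ ((((a = x ∧ b = y) ∨ (a = y ∧ b = z) ∨ (a = z ∧ b = x)) ∧ (b, a) ∉ D.arcs)) := by
  simp only [pushA, mem_union, mem_sdiff, mem_filter, mem_insert, mem_singleton,
    Prod.mk.injEq, not_or]

lemma pushA_rot (D : Digraph' n) (x y z : Fin n) : pushA D x y z = pushA D y z x := by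
  ext ⟨a, b⟩
  rw [mem_pushA, mem_pushA]
  constructor
  · rintro (⟨h1, h2, h3, h4⟩ | ⟨hf, hs⟩)
    · exact Or.inl ⟨h1, h3, h4, h2⟩
    · refine Or.inr ⟨?_, hs⟩
      rcases hf with h | h | h
      · exact Or.inr (Or.inr h)
      · exact Or.inl h
      · exact Or.inr (Or.inl h)
  · rintro (⟨h1, h2, h3, h4⟩ | ⟨hf, hs⟩)
    · exact Or.inl ⟨h1, h4, h2, h3⟩
    · refine Or.inr ⟨?_, hs⟩
      rcases hf with h | h | h
      · exact Or.inr (Or.inl h)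
      · exact Or.inr (Or.inr h)
      · exact Or.inl h

lemma pushA_oneWay (D : Digraph' n) {x y z : Fin n} (hxy : x ≠ y) (hyz : y ≠ z) (hzx : z ≠ x) :
    ∀ u v : Fin n, (u, v) ∈ pushA D x y z → (v, u) ∉ pushA D x y z := by
  intro u v h1 h2
  rw [mem_pushA] at h1 h2
  rcases h1 with ⟨h1a, _⟩ | ⟨h1f, h1s⟩ <;> rcases h2 with ⟨h2a, _⟩ | ⟨h2f, h2s⟩
  · exact D.oneWay u v h1a h2a
  · exact h2s h1a
  · exact h1s h2a
  · rcases h1f with ⟨rfl, rfl⟩ | ⟨rfl, rfl⟩ | ⟨rfl, rfl⟩ <;>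
      rcases h2f with ⟨h, h'⟩ | ⟨h, h'⟩ | ⟨h, h'⟩ <;>
      first
        | exact hxy h'
        | exact hyz h'
        | exact hzx h'
        | simp_all

/-- the pushed digraph -/
def push (D : Digraph' n) {x y z : Fin n} (hxy : x ≠ y) (hyz : y ≠ z) (hzx : z ≠ x) :
    Digraph' n := ⟨pushA D x y z, pushA_oneWay D hxy hyz hzx⟩

lemma mem_push (D : Digraph' n) {x y z : Fin n} (hxy : x ≠ y) (hyz : y ≠ z) (hzx : z ≠ x)
    (a b : Fin n) :
    ((a, b) ∈ (push D hxy hyz hzx).arcs) ↔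
      ((a, b) ∈ D.arcs ∧ ¬(a = y ∧ b = x) ∧ ¬(a = z ∧ b = y) ∧ ¬(a = x ∧ b = z))
      ∨ ((((a = x ∧ b = y) ∨ (a = y ∧ b = z) ∨ (a = z ∧ b = x)) ∧ (b, a) ∉ D.arcs)) :=
  mem_pushA D x y z a b

lemma chi_push_pres (D : Digraph' n) {x y z : Fin n} (hxy : x ≠ y) (hyz : y ≠ z) (hzx : z ≠ x)
    (a b : Fin n) (n1 : ¬(a = y ∧ b = x)) (n2 : ¬(a = z ∧ b = y)) (n3 : ¬(a = x ∧ b = z))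
    (n4 : ¬(a = x ∧ b = y)) (n5 : ¬(a = y ∧ b = z)) (n6 : ¬(a = z ∧ b = x)) :
    χ (push D hxy hyz hzx) a b = χ D a b := by
  have h : ((a, b) ∈ (push D hxy hyz hzx).arcs) ↔ (a, b) ∈ D.arcs := by
    rw [mem_push]
    constructor
    · rintro (⟨h1, _⟩ | ⟨hf, _⟩)
      · exact h1
      · rcases hf with h | h | h
        · exact absurd h n4
        · exact absurd h n5
        · exact absurd h n6
    · intro h1; exact Or.inl ⟨h1, n1, n2, n3⟩
  simp [χ, h]


lemma push_rot (D : Digraph' n) {x y z : Fin n} (hxy : x ≠ y) (hyz : y ≠ z) (hzx : z ≠ x) :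
    push D hxy hyz hzx = push D hyz hzx hxy :=
  Digraph'.ext' (pushA_rot D x y z)

lemma push_not_mem_rev (D : Digraph' n) {x y z : Fin n} (hxy : x ≠ y) (hyz : y ≠ z)
    (hzx : z ≠ x) : (y, x) ∉ (push D hxy hyz hzx).arcs := by
  rw [mem_push]
  rintro (⟨_, h2, _, _⟩ | ⟨hf, _⟩)
  · exact h2 ⟨rfl, rfl⟩
  · rcases hf with ⟨h, h'⟩ | ⟨h, h'⟩ | ⟨h, h'⟩
    · exact hxy h.symm
    · exact hzx h'.symm
    · exact hyz h

lemma push_mem_fwd (D : Digraph' n) {x y z : Fin n} (hxy : x ≠ y) (hyz : y ≠ z) (hzx : z ≠ x)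
    (axy : (x, y) ∉ D.arcs) :
    ((x, y) ∈ (push D hxy hyz hzx).arcs) ↔ (y, x) ∉ D.arcs := by
  rw [mem_push]
  constructor
  · rintro (⟨h1, _⟩ | ⟨_, hs⟩)
    · exact absurd h1 axy
    · exact hs
  · intro h; exact Or.inr ⟨Or.inl ⟨rfl, rfl⟩, h⟩

lemma push_netDeg_x (D : Digraph' n) {x y z : Fin n} (hxy : x ≠ y) (hyz : y ≠ z) (hzx : z ≠ x)
    (axy : (x, y) ∉ D.arcs) (ayz : (y, z) ∉ D.arcs) (azx : (z, x) ∉ D.arcs) :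
    (push D hxy hyz hzx).netDeg x = D.netDeg x := by
  have hrot2 : push D hxy hyz hzx = push D hzx hxy hyz := by
    rw [push_rot D hxy hyz hzx, push_rot D hyz hzx hxy]
  have f1 : χ (push D hxy hyz hzx) y x = 0 := by
    simp [χ, push_not_mem_rev D hxy hyz hzx]
  have f2 : χ (push D hxy hyz hzx) x y = 1 - χ D y x := by
    by_cases hyx : (y, x) ∈ D.arcs <;> simp [χ, push_mem_fwd D hxy hyz hzx axy, hyx]
  have f3 : χ (push D hxy hyz hzx) z x = 1 - χ D x z := by
    by_cases hxz : (x, z) ∈ D.arcs <;>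
      simp [χ, hrot2, push_mem_fwd D hzx hxy hyz azx, hxz]
  have f4 : χ (push D hxy hyz hzx) x z = 0 := by
    simp [χ, hrot2, push_not_mem_rev D hzx hxy hyz]
  have hzero : ∀ u, u ≠ y → u ≠ z →
      (χ (push D hxy hyz hzx) u x - χ D u x) - (χ (push D hxy hyz hzx) x u - χ D x u) = 0 := by
    intro u huy huz
    have e1 : χ (push D hxy hyz hzx) u x = χ D u x := by
      apply chi_push_pres D hxy hyz hzx <;> rintro ⟨h1, h2⟩ <;> subst_vars <;> simp_all
    have e2 : χ (push D hxy hyz hzx) x u = χ D x u := by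
      apply chi_push_pres D hxy hyz hzx <;> rintro ⟨h1, h2⟩ <;> subst_vars <;> simp_all
    rw [e1, e2]; ring
  have hsum : ∑ u, ((χ (push D hxy hyz hzx) u x - χ D u x)
      - (χ (push D hxy hyz hzx) x u - χ D x u)) = 0 := by
    rw [show (Finset.univ : Finset (Fin n)) = Finset.univ from rfl]
    have hss : ∑ u, ((χ (push D hxy hyz hzx) u x - χ D u x)
        - (χ (push D hxy hyz hzx) x u - χ D x u))
        = ∑ u ∈ ({y, z} : Finset (Fin n)), ((χ (push D hxy hyz hzx) u x - χ D u x)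
        - (χ (push D hxy hyz hzx) x u - χ D x u)) := by
      symm
      apply Finset.sum_subset (Finset.subset_univ _)
      intro u _ hu
      simp only [mem_insert, mem_singleton, not_or] at hu
      exact hzero u hu.1 hu.2
    rw [hss, Finset.sum_pair hyz, f1, f2, f3, f4]
    have g1 : χ D x y = 0 := by simp [χ, axy]
    have g2 : χ D z x = 0 := by simp [χ, azx]
    rw [g1, g2]; ring
  rw [netDeg_eq_sum, netDeg_eq_sum]
  have : ∀ u : Fin n, χ (push D hxy hyz hzx) u x - χ (push D hxy hyz hzx) x u
      = (χ D u x - χ D x u) + ((χ (push D hxy hyz hzx) u x - χ D u x)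
        - (χ (push D hxy hyz hzx) x u - χ D x u)) := by
    intro u; ring
  rw [Finset.sum_congr rfl fun u _ => this u, Finset.sum_add_distrib, hsum, add_zero]

lemma push_netDeg (D : Digraph' n) {x y z : Fin n} (hxy : x ≠ y) (hyz : y ≠ z) (hzx : z ≠ x)
    (axy : (x, y) ∉ D.arcs) (ayz : (y, z) ∉ D.arcs) (azx : (z, x) ∉ D.arcs) :
    (push D hxy hyz hzx).netDeg = D.netDeg := by
  funext w
  rcases eq_or_ne w x with rfl | hwx
  · exact push_netDeg_x D hxy hyz hzx axy ayz azx
  rcases eq_or_ne w y with rfl | hwy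
  · rw [push_rot D hxy hyz hzx]
    exact push_netDeg_x D hyz hzx hxy ayz azx axy
  rcases eq_or_ne w z with rfl | hwz
  · rw [push_rot D hxy hyz hzx, push_rot D hyz hzx hxy]
    exact push_netDeg_x D hzx hxy hyz azx axy ayz
  · rw [netDeg_eq_sum, netDeg_eq_sum]
    apply Finset.sum_congr rfl
    intro u _
    have e1 : χ (push D hxy hyz hzx) u w = χ D u w := by
      apply chi_push_pres D hxy hyz hzx <;> rintro ⟨h1, h2⟩ <;> subst_vars <;> simp_all
    have e2 : χ (push D hxy hyz hzx) w u = χ D w u := by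
      apply chi_push_pres D hxy hyz hzx <;> rintro ⟨h1, h2⟩ <;> subst_vars <;> simp_all
    rw [e1, e2]

lemma push_ne (D : Digraph' n) {x y z : Fin n} (hxy : x ≠ y) (hyz : y ≠ z) (hzx : z ≠ x)
    (axy : (x, y) ∉ D.arcs) : push D hxy hyz hzx ≠ D := by
  intro hEq
  by_cases hyx : (y, x) ∈ D.arcs
  · have h := push_not_mem_rev D hxy hyz hzx
    rw [hEq] at h
    exact h hyx
  · have h : (x, y) ∈ (push D hxy hyz hzx).arcs := (push_mem_fwd D hxy hyz hzx axy).2 hyx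
    rw [hEq] at h
    exact axy h


theorem completeness {d : Fin n → ℤ} (h : ∃! D : Digraph' n, D.netDeg = d) : Good d := by
  obtain ⟨D, hD, huniq⟩ := h
  -- Step A: no arcs within a level
  have hA : ∀ u v : Fin n, d u = d v → (u, v) ∈ D.arcs → False := by
    intro u v hduv harc
    have hne : u ≠ v := by rintro rfl; exact no_loop D harc
    obtain ⟨Ds, hmem, hnet⟩ := relabel (Equiv.swap u v) D
    have hds : Ds = D := by
      apply huniq
      funext w
      rw [hnet, hD]
      rcases eq_or_ne w u with rfl | hwu
      · rw [Equiv.swap_apply_left]; exact hduv.symm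
      rcases eq_or_ne w v with rfl | hwv
      · rw [Equiv.swap_apply_right]; exact hduv
      · rw [Equiv.swap_apply_of_ne_of_ne hwu hwv]
    have hvu : (v, u) ∈ D.arcs := by
      rw [← hds, hmem]
      simpa [Equiv.swap_apply_left, Equiv.swap_apply_right] using harc
    exact D.oneWay u v harc hvu
  -- Step B: no "empty" directed triangles
  have hB : ∀ x y z : Fin n, x ≠ y → y ≠ z → z ≠ x →
      (x, y) ∉ D.arcs → (y, z) ∉ D.arcs → (z, x) ∉ D.arcs → False := by
    intro x y z hxy hyz hzx axy ayz azx
    have h1 : push D hxy hyz hzx = D :=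
      huniq _ (show (push D hxy hyz hzx).netDeg = d by
        rw [push_netDeg D hxy hyz hzx axy ayz azx, hD])
    exact push_ne D hxy hyz hzx axy h1
  -- Step C: levels have at most 2 elements
  have hC : ∀ v, Eqc d v ≤ 2 := by
    intro v
    by_contra hcon
    push_neg at hcon
    obtain ⟨a, ha, b, hb, c, hc, hab, hac, hbc⟩ := Finset.two_lt_card.1 hcon
    simp only [mem_filter, mem_univ, true_and] at ha hb hc
    have e1 : d a = d b := ha.trans hb.symm
    have e2 : d b = d c := hb.trans hc.symm
    have e3 : d c = d a := hc.trans ha.symm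
    exact hB a b c hab hbc (Ne.symm hac)
      (fun hm => hA a b e1 hm) (fun hm => hA b c e2 hm) (fun hm => hA c a e3 hm)
  -- Step D: all increasing pairs are arcs
  have hinc : ∀ x y : Fin n, d x < d y → (x, y) ∈ D.arcs := by
    intro x y hlt
    by_contra haxy
    have hxyne : x ≠ y := by rintro rfl; omega
    have hl : ∀ z : Fin n, z ≠ x → z ≠ y → (y, z) ∈ D.arcs ∨ (z, x) ∈ D.arcs := by
      intro z hzx hzy
      by_contra hcon
      push_neg at hcon
      exact hB x y z hxyne (Ne.symm hzy) hzx haxy hcon.1 hcon.2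
    set c : Fin n → ℤ := fun z => (χ D z y - χ D y z) - (χ D z x - χ D x z) with hc'
    have hsum : ∑ z, c z = d y - d x := by
      have : ∑ z, c z = (∑ z, (χ D z y - χ D y z)) - ∑ z, (χ D z x - χ D x z) := by
        rw [← Finset.sum_sub_distrib]
      rw [this, ← netDeg_eq_sum, ← netDeg_eq_sum, hD]
    have hbound : ∀ z ∈ univ \ ({x, y} : Finset (Fin n)), c z ≤ 0 := by
      intro z hz
      simp only [Finset.mem_sdiff, mem_univ, true_and, mem_insert, mem_singleton, not_or] at hz
      obtain ⟨hzx, hzy⟩ := hz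
      by_cases h1 : (z, y) ∈ D.arcs
      · have h2 : (y, z) ∉ D.arcs := fun hm => D.oneWay z y h1 hm
        have h3 : (z, x) ∈ D.arcs := by
          rcases hl z hzx hzy with hm | hm
          · exact absurd hm h2
          · exact hm
        have h4 : (x, z) ∉ D.arcs := fun hm => D.oneWay z x h3 hm
        simp [hc', χ, h1, h2, h3, h4]
      · by_cases h5 : (x, z) ∈ D.arcs
        · have h6 : (z, x) ∉ D.arcs := fun hm => D.oneWay x z h5 hm
          have h7 : (y, z) ∈ D.arcs := by
            rcases hl z hzx hzy with hm | hm
            · exact hm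
            · exact absurd hm h6
          simp [hc', χ, h1, h5, h6, h7]
        · simp only [hc', χ, h1, h5, if_false]
          split_ifs <;> omega
    have hxy2 : c x + c y ≤ 0 := by
      have hcx : c x + c y = -2 * χ D y x := by
        simp only [hc', χ, haxy, if_false]
        split_ifs <;> ring
      have : (0 : ℤ) ≤ χ D y x := by unfold χ; split_ifs <;> omega
      omega
    have hsplit : ∑ z ∈ univ \ ({x, y} : Finset (Fin n)), c z
        + ∑ z ∈ ({x, y} : Finset (Fin n)), c z = ∑ z, c z :=
      Finset.sum_sdiff (Finset.subset_univ _)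
    have hpair : ∑ z ∈ ({x, y} : Finset (Fin n)), c z = c x + c y :=
      Finset.sum_pair hxyne
    have hneg : ∑ z ∈ univ \ ({x, y} : Finset (Fin n)), c z ≤ 0 :=
      Finset.sum_nonpos hbound
    omega
  constructor
  · intro v
    have hin : (univ.filter fun u => (u, v) ∈ D.arcs) = univ.filter fun u => d u < d v := by
      ext u
      simp only [mem_filter, mem_univ, true_and]
      constructor
      · intro hu
        have hune : u ≠ v := by rintro rfl; exact no_loop D hu
        rcases lt_trichotomy (d u) (d v) with h1 | h1 | h1
        · exact h1
        · exact absurd hu (fun hm => hA u v h1 hm)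
        · exact absurd (hinc v u h1) (fun hm => D.oneWay u v hu hm)
      · exact hinc u v
    have hout : (univ.filter fun u => (v, u) ∈ D.arcs) = univ.filter fun u => d v < d u := by
      ext u
      simp only [mem_filter, mem_univ, true_and]
      constructor
      · intro hu
        have hune : u ≠ v := by rintro rfl; exact no_loop D hu
        rcases lt_trichotomy (d v) (d u) with h1 | h1 | h1
        · exact h1
        · exact absurd hu (fun hm => hA v u h1 hm)
        · exact absurd (hinc u v h1) (fun hm => D.oneWay u v hm hu)
      · exact hinc v u
    have := netDeg_eq D v
    rw [hD, hin, hout] at this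
    rw [this, Lo, Hi]
  · exact hC

/-- The main characterization. -/
theorem char (d : Fin n → ℤ) : (∃! D : Digraph' n, D.netDeg = d) ↔ Good d := by
  constructor
  · exact completeness
  · rintro ⟨hE, hC⟩
    exact ⟨canon d, canon_netDeg hE, fun D hD => soundness hE hC D hD⟩


lemma d_le {k : ℕ} {e : Fin k → ℤ} (hE : ∀ v, e v = (Lo e v : ℤ) - Hi e v) (i : Fin k) :
    e i ≤ (k : ℤ) - 1 := by
  have h1 : Lo e i ≤ k - 1 := by
    have hsub : (univ.filter fun u => e u < e i) ⊆ univ.erase i := by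
      intro u hu
      simp only [mem_filter, mem_univ, true_and] at hu
      apply Finset.mem_erase.2
      refine ⟨?_, mem_univ u⟩
      rintro rfl; omega
    calc Lo e i ≤ (univ.erase i).card := Finset.card_le_card hsub
    _ = k - 1 := by rw [Finset.card_erase_of_mem (mem_univ i), Finset.card_univ, Fintype.card_fin]
  have h2 : 1 ≤ Eqc e i := one_le_eqc e i
  have h3 := lo_hi_eqc e i
  have h4 := hE i
  omega

lemma hi_zero_iff {k : ℕ} (e : Fin k → ℤ) (v : Fin k) :
    Hi e v = 0 ↔ ∀ u, ¬ (e v < e u) := by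
  unfold Hi
  rw [Finset.card_eq_zero, Finset.filter_eq_empty_iff]
  simp

/-- A vertex with value n-1 is a singleton top block -/
lemma top_of_max {d : Fin n → ℤ} (hG : Good d) {v : Fin n} (hv : d v = (n : ℤ) - 1) :
    ∀ u, u ≠ v → d u < d v := by
  obtain ⟨hE, hC⟩ := hG
  have h1 := hE v
  have h2 := lo_hi_eqc d v
  have h3 := one_le_eqc d v
  have hLo : Lo d v ≤ n - 1 := by
    have h4 := hC v; omega
  have hHi : Hi d v = 0 := by omega
  have hEq : Eqc d v = 1 := by omega
  intro u hu
  rcases lt_trichotomy (d u) (d v) with h | h | h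
  · exact h
  · exfalso
    have : 1 < Eqc d v := by
      apply Finset.one_lt_card.2
      exact ⟨u, by simp [h], v, by simp, hu⟩
    omega
  · exfalso
    rw [hi_zero_iff] at hHi
    exact hHi u h

/-- A vertex with value n-2 is part of a top pair -/
lemma top_of_pair {d : Fin n → ℤ} (hG : Good d) {v : Fin n} (hv : d v = (n : ℤ) - 2) :
    ∃ w, w ≠ v ∧ d w = d v ∧ ∀ u, u ≠ v → u ≠ w → d u < d v := by
  obtain ⟨hE, hC⟩ := hG
  have h1 := hE v
  have h2 := lo_hi_eqc d v
  have h3 := one_le_eqc d v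
  have h4 := hC v
  have hHi : Hi d v = 0 := by omega
  have hEq : Eqc d v = 2 := by omega
  have hx : 0 < ((univ.filter fun u => d u = d v).erase v).card := by
    rw [Finset.card_erase_of_mem (by simp)]
    have : (univ.filter fun u => d u = d v).card = Eqc d v := rfl
    omega
  obtain ⟨w, hw⟩ := Finset.card_pos.1 hx
  rw [Finset.mem_erase, mem_filter] at hw
  refine ⟨w, hw.1, hw.2.2, ?_⟩
  intro u hu huw
  rcases lt_trichotomy (d u) (d v) with h | h | h
  · exact h
  · exfalso
    have : 2 < Eqc d v := by
      apply Finset.two_lt_card.2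
      exact ⟨u, by simp [h], w, by simp [hw.2.2], v, by simp, huw, hu, hw.1⟩
    omega
  · exfalso
    rw [hi_zero_iff] at hHi
    exact hHi u h

lemma exists_top {d : Fin n → ℤ} (hG : Good d) (hn : 1 ≤ n) :
    (∃ v, d v = (n : ℤ) - 1) ∨ (∃ v, d v = (n : ℤ) - 2) := by
  obtain ⟨hE, hC⟩ := hG
  have hne : (univ : Finset (Fin n)).Nonempty := by
    rw [← Finset.card_pos, Finset.card_univ, Fintype.card_fin]; omega
  obtain ⟨v, _, hv⟩ := Finset.exists_max_image univ d hne
  have hHi : Hi d v = 0 := by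
    rw [hi_zero_iff]
    intro u h
    exact absurd (hv u (mem_univ u)) (by omega)
  have h1 := hE v
  have h2 := lo_hi_eqc d v
  have h3 := one_le_eqc d v
  have h4 := hC v
  have h5 : Eqc d v = 1 ∨ Eqc d v = 2 := by omega
  rcases h5 with h | h
  · left; exact ⟨v, by omega⟩
  · right; exact ⟨v, by omega⟩

section Transfer

variable {k b : ℕ} {B : Finset (Fin n)} {sg : Fin k → Fin n}
  {d : Fin n → ℤ} {d' : Fin k → ℤ}

/-- transfer of Goodness when removing a top block `B` of size `b` -/
theorem transfer (hb : b ≤ 2) (hkn : n = k + b) (hBcard : B.card = b)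
    (hinj : Function.Injective sg) (hout : ∀ i, sg i ∉ B)
    (hBval : ∀ u ∈ B, d u = (n : ℤ) - b)
    (hrel : ∀ i, d (sg i) = d' i - b)
    (hlow : ∀ i, d' i < (n : ℤ)) :
    Good d ↔ Good d' := by
  have hcover : ∀ x : Fin n, x ∉ B → ∃ i, sg i = x := by
    intro x hx
    have hsub : univ.image sg ⊆ Bᶜ := by
      intro y hy
      obtain ⟨i, _, rfl⟩ := Finset.mem_image.1 hy
      simpa using hout i
    have hcard : (univ.image sg).card = Bᶜ.card := by
      rw [Finset.card_image_of_injective _ hinj, Finset.card_compl, hBcard]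
      simp only [Finset.card_univ, Fintype.card_fin]
      omega
    have heq : univ.image sg = Bᶜ := Finset.eq_of_subset_of_card_le hsub (le_of_eq hcard.symm)
    have : x ∈ univ.image sg := by rw [heq]; simpa using hx
    obtain ⟨i, _, hi⟩ := Finset.mem_image.1 this
    exact ⟨i, hi⟩
  have hBgt : ∀ (u : Fin n), u ∈ B → ∀ i, d (sg i) < d u := by
    intro u hu i
    rw [hBval u hu, hrel i]
    have := hlow i
    omega
  have I1 : ∀ i, Lo d' i = Lo d (sg i) := by
    intro i
    apply Finset.card_bij (fun j _ => sg j)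
    · intro j hj
      simp only [Lo, mem_filter, mem_univ, true_and] at hj ⊢
      rw [hrel j, hrel i]; omega
    · intro j _ j' _ hjj'; exact hinj hjj'
    · intro x hx
      simp only [Lo, mem_filter, mem_univ, true_and] at hx
      have hxB : x ∉ B := by
        intro hxB
        exact absurd hx (by have := hBgt x hxB i; omega)
      obtain ⟨j, rfl⟩ := hcover x hxB
      refine ⟨j, ?_, rfl⟩
      simp only [mem_filter, mem_univ, true_and]
      have := hrel j; have := hrel i; omega
  have I3 : ∀ i, Eqc d' i = Eqc d (sg i) := by
    intro i
    apply Finset.card_bij (fun j _ => sg j)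
    · intro j hj
      simp only [Eqc, mem_filter, mem_univ, true_and] at hj ⊢
      rw [hrel j, hrel i]; omega
    · intro j _ j' _ hjj'; exact hinj hjj'
    · intro x hx
      simp only [Eqc, mem_filter, mem_univ, true_and] at hx
      have hxB : x ∉ B := by
        intro hxB
        exact absurd hx (by have := hBgt x hxB i; omega)
      obtain ⟨j, rfl⟩ := hcover x hxB
      refine ⟨j, ?_, rfl⟩
      simp only [mem_filter, mem_univ, true_and]
      have := hrel j; have := hrel i; omega
  have I2 : ∀ i, Hi d (sg i) = Hi d' i + b := by
    intro i
    have hset : (univ.filter fun x => d (sg i) < d x)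
        = ((univ.filter fun j => d' i < d' j).image sg) ∪ B := by
      ext x
      simp only [mem_filter, mem_univ, true_and, Finset.mem_union, Finset.mem_image]
      constructor
      · intro hx
        by_cases hxB : x ∈ B
        · exact Or.inr hxB
        · obtain ⟨j, rfl⟩ := hcover x hxB
          refine Or.inl ⟨j, ?_, rfl⟩
          have := hrel j; have := hrel i; omega
      · rintro (⟨j, hj, rfl⟩ | hxB)
        · have := hrel j; have := hrel i; omega
        · exact hBgt x hxB i
    have hdisj : Disjoint ((univ.filter fun j => d' i < d' j).image sg) B := by
      rw [Finset.disjoint_left]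
      intro x hx
      obtain ⟨j, _, rfl⟩ := Finset.mem_image.1 hx
      exact hout j
    rw [Hi, hset, Finset.card_union_of_disjoint hdisj,
      Finset.card_image_of_injective _ hinj, hBcard, Hi]
  have I4 : ∀ u ∈ B, Lo d u = k ∧ Hi d u = 0 ∧ Eqc d u = b := by
    intro u hu
    have hHi : Hi d u = 0 := by
      rw [hi_zero_iff]
      intro x hx
      by_cases hxB : x ∈ B
      · rw [hBval x hxB, hBval u hu] at hx; omega
      · obtain ⟨j, rfl⟩ := hcover x hxB
        exact absurd (hBgt u hu j) (by omega)
    have hEq : Eqc d u = b := by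
      have : (univ.filter fun x => d x = d u) = B := by
        ext x
        simp only [mem_filter, mem_univ, true_and]
        constructor
        · intro hx
          by_contra hxB
          obtain ⟨j, rfl⟩ := hcover x hxB
          exact absurd (hBgt u hu j) (by omega)
        · intro hxB; rw [hBval x hxB, hBval u hu]
      rw [Eqc, this, hBcard]
    have := lo_hi_eqc d u
    exact ⟨by omega, hHi, hEq⟩
  constructor
  · rintro ⟨hE, hC⟩
    constructor
    · intro i
      have h1 := hE (sg i)
      have h2 := I1 i; have h3 := I2 i; have h4 := hrel i
      omega
    · intro i
      have := hC (sg i)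
      have := I3 i
      omega
  · rintro ⟨hE, hC⟩
    constructor
    · intro v
      by_cases hvB : v ∈ B
      · obtain ⟨hl, hh, _⟩ := I4 v hvB
        rw [hBval v hvB, hl, hh]
        push_cast
        omega
      · obtain ⟨i, rfl⟩ := hcover v hvB
        have h1 := hE i
        have h2 := I1 i; have h3 := I2 i; have h4 := hrel i
        omega
    · intro v
      by_cases hvB : v ∈ B
      · obtain ⟨_, _, he⟩ := I4 v hvB
        omega
      · obtain ⟨i, rfl⟩ := hcover v hvB
        have := hC i
        have := I3 i
        omega

end Transfer


section Ext1

variable {k : ℕ}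

/-- extend a sequence by a new top singleton `v` -/
def ext1 (v : Fin (k+1)) (e : Fin k → ℤ) : Fin (k+1) → ℤ :=
  fun u => (finSuccEquiv' v u).elim ((k : ℤ)) (fun i => e i - 1)

lemma ext1_self (v : Fin (k+1)) (e : Fin k → ℤ) : ext1 v e v = k := by
  simp [ext1, finSuccEquiv'_at]

lemma ext1_succAbove (v : Fin (k+1)) (e : Fin k → ℤ) (i : Fin k) :
    ext1 v e (v.succAbove i) = e i - 1 := by
  simp [ext1, finSuccEquiv'_succAbove]

lemma good_ext1 {v : Fin (k+1)} {e : Fin k → ℤ} (he : Good e) : Good (ext1 v e) := by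
  refine (transfer (b := 1) (B := {v}) (sg := v.succAbove) ?_ ?_ ?_ ?_ ?_ ?_ ?_ ?_).2 he
  · omega
  · omega
  · simp
  · exact Fin.succAbove_right_injective
  · intro i; simp [Fin.succAbove_ne]
  · intro u hu
    rw [Finset.mem_singleton] at hu
    subst hu
    rw [ext1_self]
    push_cast; ring
  · intro i; rw [ext1_succAbove]; push_cast; ring
  · intro i
    have := d_le he.1 i
    push_cast; omega

lemma good_restrict1 {d : Fin (k+1) → ℤ} (hG : Good d) {v : Fin (k+1)}
    (hv : d v = (k : ℤ)) : Good (fun i => d (v.succAbove i) + 1) := by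
  refine (transfer (b := 1) (B := {v}) (sg := v.succAbove) ?_ ?_ ?_ ?_ ?_ ?_ ?_ ?_).1 hG
  · omega
  · omega
  · simp
  · exact Fin.succAbove_right_injective
  · intro i; simp [Fin.succAbove_ne]
  · intro u hu
    rw [Finset.mem_singleton] at hu
    subst hu
    rw [hv]; push_cast; ring
  · intro i; push_cast; ring
  · intro i
    have h1 : d (v.succAbove i) < d v :=
      top_of_max hG (by rw [hv]; push_cast; ring) _ (Fin.succAbove_ne v i)
    rw [hv] at h1
    push_cast; omega

lemma ext1_roundtrip {d : Fin (k+1) → ℤ} {v : Fin (k+1)} (hv : d v = (k : ℤ)) :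
    ext1 v (fun i => d (v.succAbove i) + 1) = d := by
  funext u
  rcases eq_or_ne u v with rfl | hu
  · rw [ext1_self, hv]
  · obtain ⟨i, rfl⟩ := Fin.exists_succAbove_eq hu
    rw [ext1_succAbove]; ring

lemma ext1_lt {v : Fin (k+1)} {e : Fin k → ℤ} (he : Good e) (u : Fin (k+1)) (hu : u ≠ v) :
    ext1 v e u ≤ (k : ℤ) - 2 := by
  obtain ⟨i, rfl⟩ := Fin.exists_succAbove_eq hu
  rw [ext1_succAbove]
  have := d_le he.1 i
  push_cast; omega

end Ext1

section Ext2

variable {m : ℕ}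

/-- `a` viewed in `Fin (m+1)` when `a < b` -/
def lower (a b : Fin (m+2)) (hab : a < b) : Fin (m+1) :=
  ⟨a.1, by have h1 := a.2; have h2 := b.2; have := Fin.lt_iff_val_lt_val.1 hab; omega⟩

lemma succAbove_lower (a b : Fin (m+2)) (hab : a < b) :
    b.succAbove (lower a b hab) = a := by
  have hcast : (lower a b hab).castSucc = a := by
    apply Fin.ext; simp [lower, Fin.castSucc]
  rw [Fin.succAbove_of_castSucc_lt _ _ (by rw [hcast]; exact hab), hcast]

/-- embedding of `Fin m` into `Fin (m+2)` missing `a` and `b` -/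
def emb2 (a b : Fin (m+2)) (hab : a < b) : Fin m → Fin (m+2) :=
  fun i => b.succAbove ((lower a b hab).succAbove i)

lemma emb2_inj (a b : Fin (m+2)) (hab : a < b) : Function.Injective (emb2 a b hab) :=
  Fin.succAbove_right_injective.comp Fin.succAbove_right_injective

lemma emb2_ne_a (a b : Fin (m+2)) (hab : a < b) (i : Fin m) : emb2 a b hab i ≠ a := by
  intro h
  have h2 : b.succAbove ((lower a b hab).succAbove i) = b.succAbove (lower a b hab) := by
    rw [succAbove_lower]; exact h
  exact Fin.succAbove_ne _ _ (Fin.succAbove_right_injective h2)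

lemma emb2_ne_b (a b : Fin (m+2)) (hab : a < b) (i : Fin m) : emb2 a b hab i ≠ b :=
  Fin.succAbove_ne _ _

lemma emb2_cover (a b : Fin (m+2)) (hab : a < b) (u : Fin (m+2)) (hua : u ≠ a) (hub : u ≠ b) :
    ∃ i, emb2 a b hab i = u := by
  obtain ⟨j, hj⟩ := Fin.exists_succAbove_eq hub
  have hjl : j ≠ lower a b hab := by
    rintro rfl
    rw [succAbove_lower] at hj
    exact hua hj.symm
  obtain ⟨i, hi⟩ := Fin.exists_succAbove_eq hjl
  exact ⟨i, by rw [emb2, hi, hj]⟩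

/-- extend a sequence by a new top pair `{a, b}` -/
def ext2 (a b : Fin (m+2)) (hab : a < b) (e : Fin m → ℤ) : Fin (m+2) → ℤ :=
  fun u => (finSuccEquiv' b u).elim ((m : ℤ))
    (fun j => (finSuccEquiv' (lower a b hab) j).elim ((m : ℤ)) (fun i => e i - 2))

lemma ext2_b (a b : Fin (m+2)) (hab : a < b) (e : Fin m → ℤ) : ext2 a b hab e b = m := by
  simp [ext2, finSuccEquiv'_at]

lemma ext2_a (a b : Fin (m+2)) (hab : a < b) (e : Fin m → ℤ) : ext2 a b hab e a = m := by
  have h1 : finSuccEquiv' b a = some (lower a b hab) := by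
    conv_lhs => rw [← succAbove_lower a b hab]
    rw [finSuccEquiv'_succAbove]
  simp [ext2, h1, finSuccEquiv'_at]

lemma ext2_emb (a b : Fin (m+2)) (hab : a < b) (e : Fin m → ℤ) (i : Fin m) :
    ext2 a b hab e (emb2 a b hab i) = e i - 2 := by
  simp [ext2, emb2, finSuccEquiv'_succAbove]

lemma pairB_card (a b : Fin (m+2)) (hab : a < b) : ({a, b} : Finset (Fin (m+2))).card = 2 := by
  rw [Finset.card_insert_of_notMem (by simp [hab.ne]), Finset.card_singleton]

lemma good_ext2 {a b : Fin (m+2)} {hab : a < b} {e : Fin m → ℤ} (he : Good e) :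
    Good (ext2 a b hab e) := by
  refine (transfer (b := 2) (B := {a, b}) (sg := emb2 a b hab) ?_ ?_ ?_ ?_ ?_ ?_ ?_ ?_).2 he
  · omega
  · omega
  · exact pairB_card a b hab
  · exact emb2_inj a b hab
  · intro i; simp [emb2_ne_a a b hab i, emb2_ne_b a b hab i]
  · intro u hu
    rw [Finset.mem_insert, Finset.mem_singleton] at hu
    rcases hu with rfl | rfl
    · rw [ext2_a]; push_cast; ring
    · rw [ext2_b]; push_cast; ring
  · intro i; rw [ext2_emb]; push_cast; ring
  · intro i
    have := d_le he.1 i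
    push_cast; omega

lemma top_pair_all {d : Fin (m+2) → ℤ} (hG : Good d) {a b : Fin (m+2)} (hab : a < b)
    (ha : d a = (m : ℤ)) (hb : d b = (m : ℤ)) :
    ∀ u, u ≠ a → u ≠ b → d u < (m : ℤ) := by
  have ha' : d a = ((m + 2 : ℕ) : ℤ) - 2 := by rw [ha]; push_cast; ring
  obtain ⟨w, hw1, hw2, hw3⟩ := top_of_pair hG ha'
  have hwb : w = b := by
    by_contra hcon
    have := hw3 b hab.ne' (Ne.symm hcon)
    rw [hb, ha] at this
    omega
  subst hwb
  intro u hua hub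
  have := hw3 u hua hub
  rw [ha] at this
  omega

lemma ext2_roundtrip {d : Fin (m+2) → ℤ} {a b : Fin (m+2)} (hab : a < b)
    (ha : d a = (m : ℤ)) (hb : d b = (m : ℤ)) :
    ext2 a b hab (fun i => d (emb2 a b hab i) + 2) = d := by
  funext u
  rcases eq_or_ne u a with rfl | hua
  · rw [ext2_a, ha]
  rcases eq_or_ne u b with rfl | hub
  · rw [ext2_b, hb]
  · obtain ⟨i, rfl⟩ := emb2_cover a b hab u hua hub
    rw [ext2_emb]; ring

lemma good_restrict2 {d : Fin (m+2) → ℤ} (hG : Good d) {a b : Fin (m+2)} (hab : a < b)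
    (ha : d a = (m : ℤ)) (hb : d b = (m : ℤ)) :
    Good (fun i => d (emb2 a b hab i) + 2) := by
  refine (transfer (b := 2) (B := {a, b}) (sg := emb2 a b hab) ?_ ?_ ?_ ?_ ?_ ?_ ?_ ?_).1 hG
  · omega
  · omega
  · exact pairB_card a b hab
  · exact emb2_inj a b hab
  · intro i; simp [emb2_ne_a a b hab i, emb2_ne_b a b hab i]
  · intro u hu
    rw [Finset.mem_insert, Finset.mem_singleton] at hu
    rcases hu with rfl | rfl
    · rw [ha]; push_cast; ring
    · rw [hb]; push_cast; ring
  · intro i; push_cast; ring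
  · intro i
    have h1 := top_pair_all hG hab ha hb (emb2 a b hab i)
      (emb2_ne_a a b hab i) (emb2_ne_b a b hab i)
    push_cast; omega

lemma ext2_lt {a b : Fin (m+2)} {hab : a < b} {e : Fin m → ℤ} (he : Good e) (u : Fin (m+2))
    (hua : u ≠ a) (hub : u ≠ b) : ext2 a b hab e u ≤ (m : ℤ) - 3 := by
  obtain ⟨i, rfl⟩ := emb2_cover a b hab u hua hub
  rw [ext2_emb]
  have := d_le he.1 i
  push_cast; omega

end Ext2


section Count

lemma good_finite (k : ℕ) : {d : Fin k → ℤ | Good d}.Finite := by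
  apply Set.Finite.subset (Set.Finite.pi (fun _ : Fin k => Set.finite_Icc (-(k:ℤ)) k))
  intro d hd
  rw [Set.mem_pi]
  intro i _
  rw [Set.mem_Icc]
  have h1 := hd.1 i
  have h2 : Lo d i ≤ k := by
    calc Lo d i ≤ (univ : Finset (Fin k)).card := Finset.card_filter_le _ _
    _ = k := by simp
  have h3 : Hi d i ≤ k := by
    calc Hi d i ≤ (univ : Finset (Fin k)).card := Finset.card_filter_le _ _
    _ = k := by simp
  omega

lemma U_good (k : ℕ) : U k = Nat.card {d : Fin k → ℤ // Good d} := by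
  unfold U
  have hset : {d : Fin k → ℤ | ∃! D : Digraph' k, D.netDeg = d} = {d | Good d} :=
    Set.ext fun d => char d
  rw [hset, ← Nat.card_coe_set_eq]
  rfl

lemma card_ltpairs (N : ℕ) : Nat.card {p : Fin N × Fin N // p.1 < p.2} = N.choose 2 := by
  rw [Nat.card_eq_fintype_card, Fintype.card_subtype]
  have hLG : (univ.filter fun p : Fin N × Fin N => p.1 < p.2).card
      = (univ.filter fun p : Fin N × Fin N => p.2 < p.1).card := by
    apply card_bij (fun p _ => (p.2, p.1))
    · intro p hp; simp only [mem_filter, mem_univ, true_and] at hp ⊢; exact hp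
    · intro p _ q _ h
      rw [Prod.mk.injEq] at h
      exact Prod.ext h.2 h.1
    · intro p hp
      simp only [mem_filter, mem_univ, true_and] at hp ⊢
      exact ⟨(p.2, p.1), hp, rfl⟩
  have hE : (univ.filter fun p : Fin N × Fin N => p.1 = p.2).card = N := by
    have : (univ.filter fun p : Fin N × Fin N => p.1 = p.2).card = (univ : Finset (Fin N)).card := by
      apply card_bij (fun p _ => p.1)
      · intro p _; exact mem_univ _
      · intro p hp q hq h
        simp only [mem_filter, mem_univ, true_and] at hp hq
        exact Prod.ext h (by rw [← hp, ← hq, h])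
      · intro v _
        exact ⟨(v, v), by simp, rfl⟩
    rw [this]; simp
  have hsum : (univ.filter fun p : Fin N × Fin N => p.1 < p.2).card
      + (univ.filter fun p : Fin N × Fin N => p.2 < p.1).card
      + (univ.filter fun p : Fin N × Fin N => p.1 = p.2).card = N * N := by
    rw [Finset.card_filter, Finset.card_filter, Finset.card_filter,
      ← Finset.sum_add_distrib, ← Finset.sum_add_distrib]
    have hpt : ∀ p : Fin N × Fin N,
        ((if p.1 < p.2 then 1 else 0) + (if p.2 < p.1 then 1 else 0))
          + (if p.1 = p.2 then 1 else 0) = 1 := by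
      intro p
      rcases lt_trichotomy p.1 p.2 with h | h | h <;> split_ifs <;> omega
    rw [Finset.sum_congr rfl fun p _ => hpt p, Finset.sum_const, smul_eq_mul, mul_one,
      Finset.card_univ, Fintype.card_prod, Fintype.card_fin]
  have hNN : N * (N - 1) = N * N - N := by
    rcases N with _ | k
    · simp
    · simp only [Nat.add_sub_cancel]
      have : (k+1) * (k+1) = (k+1) * k + (k+1) := by ring
      omega
  rw [Nat.choose_two_right]
  omega

lemma U_rec (m : ℕ) : U (m + 2) = (m + 2) * U (m + 1) + (m + 2).choose 2 * U m := by
  haveI h1 : Finite {e : Fin (m+1) → ℤ // Good e} := (good_finite (m+1)).to_subtype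
  haveI h2 : Finite {e : Fin m → ℤ // Good e} := (good_finite m).to_subtype
  let F : (Fin (m+2) × {e : Fin (m+1) → ℤ // Good e})
      ⊕ ({p : Fin (m+2) × Fin (m+2) // p.1 < p.2} × {e : Fin m → ℤ // Good e})
      → {d : Fin (m+2) → ℤ // Good d} := fun t =>
    match t with
    | Sum.inl (v, e) => ⟨ext1 v e.1, good_ext1 e.2⟩
    | Sum.inr (⟨⟨a, b⟩, hab⟩, e) => ⟨ext2 a b hab e.1, good_ext2 e.2⟩
  have hself1 : ∀ (v : Fin (m+2)) (e : Fin (m+1) → ℤ), ext1 v e v = (m+1 : ℤ) := by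
    intro v e; rw [ext1_self]; push_cast; ring
  have hbij : Function.Bijective F := by
    constructor
    · rintro (⟨v, e, he⟩ | ⟨⟨⟨a, b⟩, hab⟩, e, he⟩) (⟨v', e', he'⟩ | ⟨⟨⟨a', b'⟩, hab'⟩, e', he'⟩) heq <;>
        simp only [F, Subtype.mk.injEq] at heq
      · -- inl inl
        have hvv : v = v' := by
          by_contra hcon
          have h3 := ext1_lt (k := m+1) he' v hcon
          rw [← congrFun heq v, hself1] at h3
          push_cast at h3
          omega
        subst hvv
        have hee : e = e' := by
          funext i
          have := congrFun heq (v.succAbove i)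
          rw [ext1_succAbove, ext1_succAbove] at this
          omega
        subst hee
        rfl
      · -- inl inr : impossible
        exfalso
        change a' < b' at hab'
        have hva : v ≠ a' := by
          rintro rfl
          have := congrFun heq v
          rw [hself1, ext2_a] at this
          omega
        have hvb : v ≠ b' := by
          rintro rfl
          have := congrFun heq v
          rw [hself1, ext2_b] at this
          omega
        have h3 := ext2_lt (hab := hab') he' v hva hvb
        rw [← congrFun heq v, hself1] at h3
        omega
      · -- inr inl : impossible
        exfalso
        change a < b at hab
        have hva : v' ≠ a := by
          rintro rfl
          have := congrFun heq v'
          rw [hself1, ext2_a] at this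
          omega
        have hvb : v' ≠ b := by
          rintro rfl
          have := congrFun heq v'
          rw [hself1, ext2_b] at this
          omega
        have h3 := ext2_lt (hab := hab) he v' hva hvb
        rw [congrFun heq v', hself1] at h3
        omega
      · -- inr inr
        change a < b at hab
        change a' < b' at hab'
        have hmem : ∀ u : Fin (m+2), ext2 a b hab e u = (m : ℤ) → (u = a ∨ u = b) := by
          intro u hu
          by_contra hcon
          push_neg at hcon
          have := ext2_lt (hab := hab) he u hcon.1 hcon.2
          omega
        have hmem' : ∀ u : Fin (m+2), ext2 a' b' hab' e' u = (m : ℤ) → (u = a' ∨ u = b') := by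
          intro u hu
          by_contra hcon
          push_neg at hcon
          have := ext2_lt (hab := hab') he' u hcon.1 hcon.2
          omega
        have ha' : a' = a ∨ a' = b := hmem a' ((congrFun heq a').trans (ext2_a a' b' hab' e'))
        have hb' : b' = a ∨ b' = b := hmem b' ((congrFun heq b').trans (ext2_b a' b' hab' e'))
        have ha : a = a' ∨ a = b' := hmem' a ((congrFun heq a).symm.trans (ext2_a a b hab e))
        have haa : a = a' ∧ b = b' := by
          rcases ha' with rfl | rfl
          · rcases hb' with rfl | rfl
            · exact absurd hab' (lt_irrefl _)
            · exact ⟨rfl, rfl⟩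
          · rcases hb' with rfl | rfl
            · exact absurd (hab.trans hab') (lt_irrefl _)
            · rcases ha with rfl | rfl
              · exact absurd hab (lt_irrefl _)
              · exact absurd hab' (lt_irrefl _)
        obtain ⟨h5, h6⟩ := haa
        subst h5
        subst h6
        have hee : e = e' := by
          funext i
          have hcf := congrFun heq (emb2 a b hab i)
          have hA : ext2 a b hab e (emb2 a b hab i) = e i - 2 := ext2_emb a b hab e i
          have hB : ext2 a b hab' e' (emb2 a b hab i) = e' i - 2 := ext2_emb a b hab e' i
          omega
        subst hee
        exact congrArg Sum.inr (Prod.ext (Subtype.ext rfl) rfl)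
    · rintro ⟨d, hd⟩
      rcases exists_top hd (by omega) with ⟨v, hv⟩ | ⟨v, hv⟩
      · have hv' : d v = ((m : ℤ) + 1) := by rw [hv]; push_cast; ring
        refine ⟨Sum.inl (v, ⟨fun i => d (v.succAbove i) + 1, ?_⟩), ?_⟩
        · exact good_restrict1 hd (by exact_mod_cast hv')
        · simp only [F]
          exact Subtype.ext (ext1_roundtrip (by exact_mod_cast hv'))
      · have hv' : d v = (m : ℤ) := by rw [hv]; push_cast; ring
        obtain ⟨w, hw1, hw2, _⟩ := top_of_pair hd (by rw [hv']; push_cast; ring)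
        have hwv : d w = (m : ℤ) := by rw [hw2, hv']
        rcases lt_or_gt_of_ne hw1 with hlt | hgt
        · refine ⟨Sum.inr (⟨(w, v), hlt⟩, ⟨fun i => d (emb2 w v hlt i) + 2,
            good_restrict2 hd hlt hwv hv'⟩), ?_⟩
          simp only [F]
          exact Subtype.ext (ext2_roundtrip hlt hwv hv')
        · refine ⟨Sum.inr (⟨(v, w), hgt⟩, ⟨fun i => d (emb2 v w hgt i) + 2,
            good_restrict2 hd hgt hv' hwv⟩), ?_⟩
          simp only [F]
          exact Subtype.ext (ext2_roundtrip hgt hv' hwv)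
  calc U (m + 2) = Nat.card {d : Fin (m+2) → ℤ // Good d} := U_good (m+2)
  _ = Nat.card ((Fin (m+2) × {e : Fin (m+1) → ℤ // Good e})
      ⊕ ({p : Fin (m+2) × Fin (m+2) // p.1 < p.2} × {e : Fin m → ℤ // Good e})) :=
    (Nat.card_congr (Equiv.ofBijective F hbij)).symm
  _ = (m + 2) * U (m + 1) + (m + 2).choose 2 * U m := by
    rw [Nat.card_sum, Nat.card_prod, Nat.card_prod, card_ltpairs,
      Nat.card_eq_fintype_card, Fintype.card_fin, U_good (m+1), U_good m]

lemma U_zero : U 0 = 1 := by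
  unfold U
  have hset : {d : Fin 0 → ℤ | ∃! D : Digraph' 0, D.netDeg = d} = Set.univ := by
    ext d
    simp only [Set.mem_setOf_eq, Set.mem_univ, iff_true]
    exact (char d).2 ⟨fun v => v.elim0, fun v => v.elim0⟩
  rw [hset, Set.ncard_univ]
  haveI : Subsingleton (Fin 0 → ℤ) := ⟨fun f g => funext fun i => i.elim0⟩
  haveI : Nonempty (Fin 0 → ℤ) := ⟨fun _ => 0⟩
  exact Nat.card_unique

lemma U_one : U 1 = 1 := by
  unfold U
  have hset : {d : Fin 1 → ℤ | ∃! D : Digraph' 1, D.netDeg = d} = {fun _ => 0} := by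
    ext d
    simp only [Set.mem_setOf_eq, Set.mem_singleton_iff]
    rw [char d]
    constructor
    · intro hd
      funext v
      have h1 := hd.1 v
      have h2 : Lo d v = 0 := by
        rw [Lo, Finset.card_eq_zero, Finset.filter_eq_empty_iff]
        intro u _
        have : u = v := Subsingleton.elim u v
        rw [this]; omega
      have h3 : Hi d v = 0 := by
        rw [Hi, Finset.card_eq_zero, Finset.filter_eq_empty_iff]
        intro u _
        have : u = v := Subsingleton.elim u v
        rw [this]; omega
      rw [h1, h2, h3]; rfl
    · rintro rfl
      constructor
      · intro v
        have h2 : Lo (fun _ : Fin 1 => (0:ℤ)) v = 0 := by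
          rw [Lo, Finset.card_eq_zero, Finset.filter_eq_empty_iff]
          intro u _; omega
        have h3 : Hi (fun _ : Fin 1 => (0:ℤ)) v = 0 := by
          rw [Hi, Finset.card_eq_zero, Finset.filter_eq_empty_iff]
          intro u _; omega
        rw [h2, h3]; rfl
      · intro v
        calc Eqc (fun _ : Fin 1 => (0:ℤ)) v ≤ (univ : Finset (Fin 1)).card :=
          Finset.card_filter_le _ _
        _ ≤ 2 := by simp
  rw [hset, Set.ncard_singleton]

end Count

end UR


/-- Recurrence: `U(0) = U(1) = 1` and `U(n) = n U(n−1) + C(n,2) U(n−2)` for `n ≥ 2`. -/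
theorem U_recurrence :
    U 0 = 1 ∧ U 1 = 1 ∧
      ∀ n : ℕ, 2 ≤ n → U n = n * U (n - 1) + n.choose 2 * U (n - 2) := by
  refine ⟨UR.U_zero, UR.U_one, ?_⟩
  intro n hn
  obtain ⟨m, rfl⟩ : ∃ m, n = m + 2 := ⟨n - 2, by omega⟩
  have h1 : m + 2 - 1 = m + 1 := by omega
  have h2 : m + 2 - 2 = m := by omega
  rw [h1, h2]
  exact UR.U_rec m
end

section
/- For a vector d = (d_1,…,d_n) ∈ ℤ^n, there exists a bidirected graph B on vertex set [n] with net-degree sequence ds(B) = d if and only if d_1 + ⋯ + d_n is even and −(n−1) ≤ d_i ≤ n−1 for all i = 1,…,n. -/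
/-- A bidirected graph (bigraph) on vertex set `Fin n`, encoded by its bidirection
function: `bd u v` is the local orientation `τ(u, uv) ∈ {−1,+1}` of the edge `uv` at its
endpoint `u` if `uv` is an edge, and `0` if `u` and `v` are not joined by an edge. -/
structure Bigraph (n : ℕ) where
  bd : Fin n → Fin n → ℤ
  bd_mem : ∀ u v, bd u v = -1 ∨ bd u v = 0 ∨ bd u v = 1
  loopless : ∀ v, bd v v = 0
  adj_symm : ∀ u v, bd u v = 0 ↔ bd v u = 0

/-- The net-degree of a node `v`: the sum of the local orientations at `v` of all edges
incident to `v`. -/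
def Bigraph.netDeg {n : ℕ} (B : Bigraph n) (v : Fin n) : ℤ := ∑ u, B.bd v u


/-!
At a vertex `v` every incident edge contributes `±1`, so `|netDeg v| ≤ deg v ≤ n - 1` and
`netDeg v ≡ deg v (mod 2)`; summing, the handshake lemma makes `∑ netDeg` even.

Conversely, `d` is realized on any simple graph `G` with `|d v| ≤ deg v` and
`d v ≡ deg v (mod 2)`: at each `v` orient `(deg v + d v) / 2` of its edges positively and the
rest negatively. For `G` take the complete graph minus a matching on the vertices where
`d v ≢ n - 1 (mod 2)`; there are evenly many of them because `∑ d` and `n (n - 1)` are even.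
-/

open Finset

theorem Finset.even_sum_iff_even_card_odd_int {ι : Type*} (s : Finset ι) (f : ι → ℤ) :
    Even (∑ x ∈ s, f x) ↔ Even #{x ∈ s | Odd (f x)} := by
  classical
  induction s using Finset.cons_induction with
  | empty => simp
  | cons a s ha ih =>
    rw [filter_cons, sum_cons, Int.even_add, ih]
    split_ifs with h
    · rw [card_cons, Nat.even_add_one]
      simp [Int.not_even_iff_odd.mpr h]
    · simp [Int.not_odd_iff_even.mp h]

open Classical in
theorem SimpleGraph.exists_degree_eq_ite_mem {V : Type*} [Fintype V] [DecidableEq V]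
    (S : Finset V) (hS : Even #S) :
    ∃ M : SimpleGraph V, ∀ v, M.degree v = if v ∈ S then 1 else 0 := by
  obtain ⟨M, hverts, hM⟩ :=
    ((IsClique.top (s := (S : Set V))).even_iff_exists_isMatching S.finite_toSet).1
      (by rwa [Set.ncard_coe_finset])
  refine ⟨M.spanningCoe, fun v => ?_⟩
  rw [Subgraph.degree_spanningCoe]
  split_ifs with hv
  · exact Subgraph.isMatching_iff_forall_degree.1 hM v (by simpa [hverts] using hv)
  · exact Subgraph.degree_of_notMem_verts (by simpa [hverts] using hv)

namespace Bigraph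

variable {n : ℕ}

def graph (B : Bigraph n) : SimpleGraph (Fin n) where
  Adj u v := B.bd u v ≠ 0
  symm := ⟨fun u v => mt (B.adj_symm u v).2⟩
  loopless := ⟨fun v h => h (B.loopless v)⟩

instance (B : Bigraph n) : DecidableRel B.graph.Adj :=
  fun u v => inferInstanceAs (Decidable (B.bd u v ≠ 0))

lemma abs_bd_eq_ite (B : Bigraph n) (u v : Fin n) :
    |B.bd u v| = if B.bd u v ≠ 0 then 1 else 0 := by
  rcases B.bd_mem u v with h | h | h <;> simp [h]

lemma degree_eq_sum_abs_bd (B : Bigraph n) (v : Fin n) :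
    (B.graph.degree v : ℤ) = ∑ u, |B.bd v u| := by
  simp only [abs_bd_eq_ite, ← SimpleGraph.card_neighborFinset_eq_degree,
    SimpleGraph.neighborFinset_eq_filter, card_filter, Nat.cast_sum, Nat.cast_ite,
    Nat.cast_one, Nat.cast_zero]
  rfl

lemma abs_netDeg_le_degree (B : Bigraph n) (v : Fin n) : |B.netDeg v| ≤ B.graph.degree v := by
  rw [degree_eq_sum_abs_bd]
  exact abs_sum_le_sum_abs _ _

lemma abs_netDeg_le (B : Bigraph n) (v : Fin n) : |B.netDeg v| ≤ n - 1 := by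
  have hdeg := B.graph.degree_lt_card_verts v
  rw [Fintype.card_fin] at hdeg
  have := B.abs_netDeg_le_degree v
  omega

lemma even_netDeg_sub_degree (B : Bigraph n) (v : Fin n) :
    Even (B.netDeg v - B.graph.degree v) := by
  rw [degree_eq_sum_abs_bd, netDeg, ← sum_sub_distrib]
  refine even_sum _ fun u _ => ?_
  rcases abs_choice (B.bd v u) with h | h <;> rw [h] <;> simp [← two_mul]

lemma even_sum_netDeg (B : Bigraph n) : Even (∑ v, B.netDeg v) := by
  have hdeg : Even (∑ v, (B.graph.degree v : ℤ)) := by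
    rw [← Nat.cast_sum, B.graph.sum_degrees_eq_twice_card_edges]
    simp
  have hdiff : Even (∑ v, (B.netDeg v - B.graph.degree v)) :=
    even_sum _ fun v _ => B.even_netDeg_sub_degree v
  simpa [sum_sub_distrib] using hdiff.add hdeg

section Orientation

variable (G : SimpleGraph (Fin n)) [DecidableRel G.Adj]

def orient (P : Fin n → Finset (Fin n)) : Bigraph n where
  bd v u := if G.Adj v u then (if u ∈ P v then 1 else -1) else 0
  bd_mem u v := by split_ifs <;> simp
  loopless v := by simp
  adj_symm u v := by split_ifs <;> simp_all [G.adj_comm]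

lemma netDeg_orient {P : Fin n → Finset (Fin n)} {v : Fin n} (hP : P v ⊆ G.neighborFinset v) :
    (orient G P).netDeg v = 2 * #(P v) - G.degree v := by
  have hsign : ∀ u, (if u ∈ P v then (1 : ℤ) else -1) = 2 * (if u ∈ P v then 1 else 0) - 1 := by
    intro u
    split_ifs <;> norm_num
  simp only [netDeg, orient, ← sum_filter, ← SimpleGraph.neighborFinset_eq_filter, hsign,
    sum_sub_distrib, ← mul_sum, filter_mem_eq_inter, inter_eq_right.2 hP]
  simp

theorem exists_netDeg_eq_of_abs_le_degree (d : Fin n → ℤ) (hle : ∀ v, |d v| ≤ G.degree v)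
    (hpar : ∀ v, Even (d v + G.degree v)) : ∃ B : Bigraph n, B.netDeg = d := by
  have hhalf : ∀ v, ∃ P ⊆ G.neighborFinset v, 2 * (#P : ℤ) = d v + G.degree v := by
    intro v
    obtain ⟨k, hk⟩ := hpar v
    have := abs_le.1 (hle v)
    obtain ⟨P, hPsub, hPcard⟩ := exists_subset_card_eq (s := G.neighborFinset v) (n := k.toNat)
      (by rw [G.card_neighborFinset_eq_degree]; omega)
    exact ⟨P, hPsub, by omega⟩
  choose P hPsub hPcard using hhalf
  exact ⟨orient G P, funext fun v => by rw [netDeg_orient G (hPsub v), hPcard]; ring⟩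

end Orientation

theorem exists_netDeg_eq (d : Fin n → ℤ) (heven : Even (∑ v, d v)) (hle : ∀ v, |d v| ≤ n - 1) :
    ∃ B : Bigraph n, B.netDeg = d := by
  classical
  set S : Finset (Fin n) := {v | Odd (d v + n - 1)}
  have hS : Even #S := by
    have hsum : ∑ v, (d v + n - 1) = ∑ v, d v + n * (n - 1) := by
      simp only [sum_sub_distrib, sum_add_distrib, sum_const, card_univ, Fintype.card_fin,
        Int.nsmul_eq_mul, mul_one]
      ring
    rw [← even_sum_iff_even_card_odd_int, hsum]
    exact heven.add (Int.even_mul_pred_self n)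
  obtain ⟨M, hM⟩ := SimpleGraph.exists_degree_eq_ite_mem S hS
  have hdeg : ∀ v, Mᶜ.degree v = n - 1 - if v ∈ S then 1 else 0 := fun v => by
    rw [SimpleGraph.degree_compl, hM, Fintype.card_fin]
  have hdv : ∀ v, |d v| ≤ Mᶜ.degree v ∧ Even (d v + Mᶜ.degree v) := fun v => by
    have := abs_le.1 (hle v)
    rw [hdeg, abs_le, Int.even_iff]
    split_ifs with h <;> simp only [S, mem_filter, mem_univ, true_and, Int.odd_iff] at h <;> omega
  exact exists_netDeg_eq_of_abs_le_degree Mᶜ d (fun v => (hdv v).1) (fun v => (hdv v).2)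

end Bigraph

/-- Erdős–Gallai-type theorem for bigraphs: `d ∈ ℤ^n` is the net-degree sequence of a
bidirected graph iff `d₁ + ⋯ + dₙ` is even and `−(n−1) ≤ dᵢ ≤ n−1` for all `i`. -/
theorem netDegree_sequence_bigraph_iff (n : ℕ) (d : Fin n → ℤ) :
    (∃ B : Bigraph n, B.netDeg = d) ↔
      (Even (∑ i, d i) ∧ ∀ i, -((n : ℤ) - 1) ≤ d i ∧ d i ≤ (n : ℤ) - 1) := by
  constructor
  · rintro ⟨B, rfl⟩
    exact ⟨B.even_sum_netDeg, fun i => abs_le.1 (B.abs_netDeg_le i)⟩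
  · rintro ⟨heven, hbound⟩
    exact Bigraph.exists_netDeg_eq d heven fun i => abs_le.2 (hbound i)
end

section
/- Let B = (G,τ) and B' = (G,τ') be bidirected graphs with the same underlying simple graph G and with equal net-degree sequences ds(B) = ds(B'). Then B can be transformed into B' by a finite sequence of Γ-operations. -/
/-- A Γ-operation: at a node `v` with incident edges `vu` and `vw` (`u ≠ w`) whose local
orientations at `v` differ, swap these two local orientations; everything else is
unchanged. -/
def GammaStep {n : ℕ} (B B' : Bigraph n) : Prop :=
  ∃ u v w : Fin n, u ≠ w ∧
    B.bd v u ≠ 0 ∧ B.bd v w ≠ 0 ∧ B.bd v u ≠ B.bd v w ∧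
    B'.bd v u = B.bd v w ∧ B'.bd v w = B.bd v u ∧
    ∀ a b : Fin n, ¬(a = v ∧ (b = u ∨ b = w)) → B'.bd a b = B.bd a b

private lemma Bigraph.ext' {n : ℕ} {B B' : Bigraph n} (h : B.bd = B'.bd) : B = B' := by
  cases B; cases B'; simpa using h

private def swapFun {n : ℕ} (B : Bigraph n) (v u w : Fin n) : Fin n → Fin n → ℤ :=
  fun a b => if a = v ∧ b = u then B.bd v w else if a = v ∧ b = w then B.bd v u else B.bd a b

private lemma swapFun_zero_iff {n : ℕ} (B : Bigraph n) (v u w : Fin n)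
    (hu : B.bd v u ≠ 0) (hw : B.bd v w ≠ 0) (a b : Fin n) :
    swapFun B v u w a b = 0 ↔ B.bd a b = 0 := by
  unfold swapFun
  split_ifs with h1 h2
  · obtain ⟨rfl, rfl⟩ := h1; simp [hu, hw]
  · obtain ⟨rfl, rfl⟩ := h2; simp [hu, hw]
  · rfl

private def swapB {n : ℕ} (B : Bigraph n) (v u w : Fin n)
    (hu : B.bd v u ≠ 0) (hw : B.bd v w ≠ 0) : Bigraph n where
  bd := swapFun B v u w
  bd_mem a b := by
    unfold swapFun; split_ifs
    · exact B.bd_mem v w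
    · exact B.bd_mem v u
    · exact B.bd_mem a b
  loopless a := (swapFun_zero_iff B v u w hu hw a a).mpr (B.loopless a)
  adj_symm a b := by
    rw [swapFun_zero_iff B v u w hu hw a b, swapFun_zero_iff B v u w hu hw b a]
    exact B.adj_symm a b

private lemma swapB_netDeg {n : ℕ} (B : Bigraph n) (v u w : Fin n)
    (hu : B.bd v u ≠ 0) (hw : B.bd v w ≠ 0) :
    (swapB B v u w hu hw).netDeg = B.netDeg := by
  funext x
  unfold Bigraph.netDeg
  rcases eq_or_ne x v with h | hxv
  · rw [h]
    have hpt : ∀ b, (swapB B v u w hu hw).bd v b = B.bd v (Equiv.swap u w b) := by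
      intro b
      rcases eq_or_ne b u with rfl | hbu
      · simp [swapB, swapFun]
      · rcases eq_or_ne b w with rfl | hbw
        · simp [swapB, swapFun, hbu, (Ne.symm hbu)]
        · simp [swapB, swapFun, hbu, hbw, Equiv.swap_apply_of_ne_of_ne hbu hbw]
    rw [Finset.sum_congr rfl (fun b _ => hpt b)]
    exact Equiv.sum_comp (Equiv.swap u w) (B.bd v)
  · refine Finset.sum_congr rfl (fun b _ => ?_)
    simp [swapB, swapFun, hxv]

private def diffSet {n : ℕ} (B B' : Bigraph n) : Finset (Fin n × Fin n) :=
  Finset.univ.filter (fun p => B.bd p.1 p.2 ≠ B'.bd p.1 p.2)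

private lemma step_lemma {n : ℕ} (B B' : Bigraph n)
    (hgraph : ∀ u v : Fin n, B.bd u v ≠ 0 ↔ B'.bd u v ≠ 0)
    (hdeg : B.netDeg = B'.netDeg)
    (hne : B.bd ≠ B'.bd) :
    ∃ B₂ : Bigraph n, GammaStep B B₂ ∧
      (∀ u v : Fin n, B₂.bd u v ≠ 0 ↔ B'.bd u v ≠ 0) ∧
      B₂.netDeg = B'.netDeg ∧
      diffSet B₂ B' ⊂ diffSet B B' := by
  have hzz : ∀ a b : Fin n, B.bd a b = 0 ↔ B'.bd a b = 0 := fun a b =>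
    not_iff_not.mp (hgraph a b)
  have hex : ∃ v u, B.bd v u ≠ B'.bd v u := by
    by_contra h; push_neg at h
    exact hne (funext fun v => funext fun u => h v u)
  obtain ⟨v, u, hvu⟩ := hex
  have hzu : B.bd v u ≠ 0 := fun h0 => hvu (h0.trans ((hzz v u).mp h0).symm)
  have hzu' : B'.bd v u ≠ 0 := fun h0 => hvu (((hzz v u).mpr h0).trans h0.symm)
  have hsum : ∑ x, B.bd v x = ∑ x, B'.bd v x := congrFun hdeg v
  -- find the partner w
  have key : ∃ w, B.bd v w = B'.bd v u ∧ B'.bd v w = B.bd v u := by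
    rcases (B.bd_mem v u) with hu1 | hu1 | hu1 <;> rcases (B'.bd_mem v u) with hu2 | hu2 | hu2 <;>
      first
        | exact absurd hu1 hzu | exact absurd hu2 hzu' | exact absurd (hu1.trans hu2.symm) hvu
        | skip
    · -- B.bd v u = -1, B'.bd v u = 1 : find w with B - B' > 0
      have hw : ∃ w, 0 < B.bd v w - B'.bd v w := by
        by_contra h; push_neg at h
        have hpos : 0 < ∑ x, (B'.bd v x - B.bd v x) :=
          Finset.sum_pos' (fun i _ => by have := h i; omega)
            ⟨u, Finset.mem_univ u, by rw [hu1, hu2]; norm_num⟩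
        rw [Finset.sum_sub_distrib] at hpos
        omega
      obtain ⟨w, hw⟩ := hw
      have hiffw := hzz v w
      refine ⟨w, ?_⟩
      rcases B.bd_mem v w with h1 | h1 | h1 <;> rcases B'.bd_mem v w with h2 | h2 | h2 <;>
        rw [h1, h2] at hw hiffw ⊢ <;> rw [hu1, hu2] <;>
        first | exact ⟨rfl, rfl⟩ | omega | simp at hiffw
    · -- B.bd v u = 1, B'.bd v u = -1 : find w with B - B' < 0
      have hw : ∃ w, B.bd v w - B'.bd v w < 0 := by
        by_contra h; push_neg at h
        have hpos : 0 < ∑ x, (B.bd v x - B'.bd v x) :=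
          Finset.sum_pos' (fun i _ => by have := h i; omega)
            ⟨u, Finset.mem_univ u, by rw [hu1, hu2]; norm_num⟩
        rw [Finset.sum_sub_distrib] at hpos
        omega
      obtain ⟨w, hw⟩ := hw
      have hiffw := hzz v w
      refine ⟨w, ?_⟩
      rcases B.bd_mem v w with h1 | h1 | h1 <;> rcases B'.bd_mem v w with h2 | h2 | h2 <;>
        rw [h1, h2] at hw hiffw ⊢ <;> rw [hu1, hu2] <;>
        first | exact ⟨rfl, rfl⟩ | omega | simp at hiffw
  obtain ⟨w, hw1, hw2⟩ := key
  have hzw : B.bd v w ≠ 0 := by rw [hw1]; exact hzu'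
  have huw : u ≠ w := by
    intro h; subst h; exact hvu hw1
  have hd1 : swapFun B v u w v u = B'.bd v u := by
    rw [swapFun, if_pos ⟨rfl, rfl⟩]; exact hw1
  have hd2 : swapFun B v u w v w = B'.bd v w := by
    rw [swapFun]
    rw [if_neg (fun h => huw (h.2.symm.trans rfl)), if_pos ⟨rfl, rfl⟩]
    exact hw2.symm
  have hrest : ∀ a b : Fin n, ¬(a = v ∧ (b = u ∨ b = w)) → swapFun B v u w a b = B.bd a b := by
    intro a b hab
    rw [swapFun]
    rw [if_neg (fun h => hab ⟨h.1, Or.inl h.2⟩), if_neg (fun h => hab ⟨h.1, Or.inr h.2⟩)]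
  refine ⟨swapB B v u w hzu hzw, ?_, ?_, ?_, ?_⟩
  · refine ⟨u, v, w, huw, hzu, hzw, ?_, ?_, ?_, hrest⟩
    · rw [hw1]; exact hvu
    · show swapFun B v u w v u = B.bd v w
      rw [swapFun, if_pos ⟨rfl, rfl⟩]
    · show swapFun B v u w v w = B.bd v u
      rw [swapFun]
      rw [if_neg (fun h => huw (h.2.symm.trans rfl)), if_pos ⟨rfl, rfl⟩]
  · intro a b
    exact (not_congr (swapFun_zero_iff B v u w hzu hzw a b)).trans (hgraph a b)
  · exact (swapB_netDeg B v u w hzu hzw).trans hdeg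
  · have hsub : diffSet (swapB B v u w hzu hzw) B' ⊆ diffSet B B' := by
      intro p hp
      simp only [diffSet, Finset.mem_filter, Finset.mem_univ, true_and] at hp ⊢
      obtain ⟨a, b⟩ := p
      by_cases hab : a = v ∧ (b = u ∨ b = w)
      · obtain ⟨rfl, hb⟩ := hab
        rcases hb with rfl | rfl
        · exact absurd hd1 hp
        · exact absurd hd2 hp
      · rwa [show (swapB B v u w hzu hzw).bd a b = B.bd a b from hrest a b hab] at hp
    refine (Finset.ssubset_iff_of_subset hsub).mpr ⟨(v, u), ?_, ?_⟩
    · simp only [diffSet, Finset.mem_filter, Finset.mem_univ, true_and]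
      exact hvu
    · simp only [diffSet, Finset.mem_filter, Finset.mem_univ, true_and, not_not]
      exact hd1

/-- Two bigraphs with the same underlying simple graph and the same net-degree sequence
can be transformed into each other by a finite sequence of Γ-operations. -/
theorem gamma_connects_same_underlying_graph (n : ℕ) (B B' : Bigraph n)
    (hgraph : ∀ u v : Fin n, B.bd u v ≠ 0 ↔ B'.bd u v ≠ 0)
    (hdeg : B.netDeg = B'.netDeg) :
    Relation.ReflTransGen GammaStep B B' := by
  have main : ∀ k : ℕ, ∀ B B' : Bigraph n,
      (∀ u v : Fin n, B.bd u v ≠ 0 ↔ B'.bd u v ≠ 0) → B.netDeg = B'.netDeg →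
      (diffSet B B').card = k → Relation.ReflTransGen GammaStep B B' := by
    intro k
    induction k using Nat.strong_induction_on with
    | _ k ih =>
      intro B B' hg hd hc
      by_cases hbd : B.bd = B'.bd
      · rw [Bigraph.ext' hbd]
      · obtain ⟨B₂, hstep, hg₂, hd₂, hss⟩ := step_lemma B B' hg hd hbd
        exact Relation.ReflTransGen.head hstep
          (ih _ (hc ▸ Finset.card_lt_card hss) B₂ B' hg₂ hd₂ rfl)
  exact main _ B B' hgraph hdeg rfl
end
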